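/- arXiv:1409.1015 — 4 statements merged into one kernel-verified Lean document; each statement's English description precedes it below -/
import Mathlib

section
/- Let $n\in\mathbb{N}$, $n\ge1$, and define $F_n(x)=\sum_{k=0}^{n}\binom{n}{k}^2 x^{2k}(1-x)^{2(n-k)}$. Then for every $x\in[0,1]$, $F_n(x)\le\frac{1}{\sqrt{1+4(n-1)x(1-x)}}$. -/
open scoped BigOperators

set_option maxHeartbeats 1000000

namespace Stmt16

open Finset

noncomputable def bb (x : ℝ) (m k : ℕ) : ℝ := (m.choose k : ℝ) * x^k * (1-x)^(m-k)

noncomputable def F (x : ℝ) (m : ℕ) : ℝ := ∑ k ∈ range (m+1), (bb x m k)^2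

lemma choose_rel (m k : ℕ) :
    ((k:ℝ)+1) * (m.choose (k+1) : ℝ) = ((m:ℝ) - k) * (m.choose k : ℝ) := by
  rcases le_or_gt m k with h | h
  · rw [Nat.choose_eq_zero_of_lt (by omega)]
    rcases eq_or_lt_of_le h with rfl | h'
    · simp
    · rw [Nat.choose_eq_zero_of_lt h']; ring
  · have := Nat.choose_succ_right_eq m k
    have hc : ((m.choose (k+1) * (k+1) : ℕ) : ℝ) = ((m.choose k * (m - k) : ℕ) : ℝ) := by
      exact_mod_cast congrArg (Nat.cast (R := ℝ)) this
    push_cast [Nat.cast_sub h.le] at hc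
    linarith [hc]

lemma rec_coeff (m k : ℕ) :
    ((m:ℝ)+2) * ((m+2).choose (k+2) : ℝ)^2 =
      (2*(m:ℝ)+3) * (((m+1).choose (k+1) : ℝ)^2 + ((m+1).choose (k+2) : ℝ)^2)
      - ((m:ℝ)+1) * ((m.choose k : ℝ)^2 - 2*(m.choose (k+1) : ℝ)^2 + (m.choose (k+2) : ℝ)^2) := by
  have p1 : ((m+1).choose (k+1) : ℝ) = (m.choose k : ℝ) + (m.choose (k+1) : ℝ) := by
    rw [Nat.choose_succ_succ]; push_cast; ring
  have p2 : ((m+1).choose (k+2) : ℝ) = (m.choose (k+1) : ℝ) + (m.choose (k+2) : ℝ) := by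
    rw [Nat.choose_succ_succ]; push_cast; ring
  have p3 : ((m+2).choose (k+2) : ℝ) = (m.choose k : ℝ) + 2*(m.choose (k+1) : ℝ) + (m.choose (k+2) : ℝ) := by
    have e : (m+2).choose (k+2) = (m+1).choose (k+1) + (m+1).choose (k+2) := Nat.choose_succ_succ (m+1) (k+1)
    rw [e]; push_cast; linarith [p1, p2]
  set a := (m.choose k : ℝ)
  set b := (m.choose (k+1) : ℝ)
  set c := (m.choose (k+2) : ℝ)
  have r1 : ((k:ℝ)+1) * b = ((m:ℝ) - k) * a := choose_rel m k
  have r2 : ((k:ℝ)+2) * c = ((m:ℝ) - k - 1) * b := by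
    have := choose_rel m (k+1); push_cast at this; linarith [this]
  rw [p1, p2, p3]
  have hk1 : ((k:ℝ)+1) ≠ 0 := by positivity
  have hk2 : ((k:ℝ)+2) ≠ 0 := by positivity
  have hb : b = ((m:ℝ) - k) * a / ((k:ℝ)+1) := by field_simp; linarith [r1]
  have hc : c = ((m:ℝ) - k - 1) * b / ((k:ℝ)+2) := by field_simp; linarith [r2]
  rw [hc, hb]
  field_simp
  ring

lemma F_rec (x : ℝ) (m : ℕ) :
    ((m:ℝ)+2) * F x (m+2) =
      ((1-x)^2 + x^2) * ((2*(m:ℝ)+3) * F x (m+1))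
      - ((1-x)^2 - x^2)^2 * (((m:ℝ)+1) * F x m) := by
  have hz1 : (m+1).choose (m+2) = 0 := Nat.choose_eq_zero_of_lt (by omega)
  have hz2 : m.choose (m+1) = 0 := Nat.choose_eq_zero_of_lt (by omega)
  have hz3 : m.choose (m+2) = 0 := Nat.choose_eq_zero_of_lt (by omega)
  have S0 : F x (m+2) = ∑ j ∈ range (m+3), ((m+2).choose j : ℝ)^2 * (x^(2*j) * (1-x)^(2*(m+2-j))) := by
    unfold F bb
    refine Finset.sum_congr rfl fun k _ => by ring
  have S1 : (1-x)^2 * F x (m+1) = ∑ j ∈ range (m+3), ((m+1).choose j : ℝ)^2 * (x^(2*j) * (1-x)^(2*(m+2-j))) := by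
    unfold F bb
    conv_rhs => rw [Finset.sum_range_succ]
    rw [hz1, Finset.mul_sum, Nat.cast_zero, zero_pow (by norm_num : (2:ℕ) ≠ 0), zero_mul, add_zero]
    refine Finset.sum_congr rfl fun k hk => ?_
    have hk' : k ≤ m+1 := Nat.lt_succ_iff.mp (Finset.mem_range.mp hk)
    rw [show m+2-k = (m+1-k)+1 by omega]
    ring
  have S2 : x^2 * F x (m+1) = ∑ j ∈ range (m+3),
      (if j = 0 then 0 else ((m+1).choose (j-1) : ℝ)^2) * (x^(2*j) * (1-x)^(2*(m+2-j))) := by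
    unfold F bb
    conv_rhs => rw [Finset.sum_range_succ' (fun j => (if j = 0 then (0:ℝ) else ((m+1).choose (j-1) : ℝ)^2) * (x^(2*j) * (1-x)^(2*(m+2-j)))) (m+2)]
    simp only [Nat.succ_ne_zero, if_false, if_true, Nat.add_sub_cancel, ite_true, ite_false,
      reduceIte, zero_mul, add_zero]
    rw [Finset.mul_sum]
    refine Finset.sum_congr rfl fun k _ => ?_
    rw [show m+2-(k+1) = (m+1-k)+0 by omega]
    ring
  have ext4 : F x m = ∑ k ∈ range (m+2), (bb x m k)^2 := by
    unfold bb
    rw [Finset.sum_range_succ, hz2, Nat.cast_zero, zero_mul, zero_mul,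
      zero_pow (by norm_num : (2:ℕ) ≠ 0), add_zero]
    unfold F bb
    rfl
  have S3 : (1-x)^4 * F x m = ∑ j ∈ range (m+3), ((m).choose j : ℝ)^2 * (x^(2*j) * (1-x)^(2*(m+2-j))) := by
    rw [ext4]
    unfold bb
    conv_rhs => rw [Finset.sum_range_succ]
    rw [hz3, Finset.mul_sum, Nat.cast_zero, zero_pow (by norm_num : (2:ℕ) ≠ 0), zero_mul, add_zero]
    refine Finset.sum_congr rfl fun k hk => ?_
    have hk' : k ≤ m+1 := Nat.lt_succ_iff.mp (Finset.mem_range.mp hk)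
    rcases le_or_gt k m with h | h
    · rw [show m+2-k = (m-k)+2 by omega]
      ring
    · have : k = m+1 := by omega
      subst this
      rw [hz2]
      push_cast; ring
  have S4 : x^2 * (1-x)^2 * F x m = ∑ j ∈ range (m+3),
      (if j = 0 then 0 else ((m).choose (j-1) : ℝ)^2) * (x^(2*j) * (1-x)^(2*(m+2-j))) := by
    rw [ext4]
    unfold bb
    conv_rhs => rw [Finset.sum_range_succ' (fun j => (if j = 0 then (0:ℝ) else ((m).choose (j-1) : ℝ)^2) * (x^(2*j) * (1-x)^(2*(m+2-j)))) (m+2)]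
    simp only [Nat.succ_ne_zero, if_false, if_true, Nat.add_sub_cancel, ite_true, ite_false,
      reduceIte, zero_mul, add_zero]
    rw [Finset.mul_sum]
    refine Finset.sum_congr rfl fun k hk => ?_
    have hk' : k ≤ m+1 := Nat.lt_succ_iff.mp (Finset.mem_range.mp hk)
    rcases le_or_gt k m with h | h
    · rw [show m+2-(k+1) = (m-k)+1 by omega]
      ring
    · have : k = m+1 := by omega
      subst this
      rw [hz2]
      push_cast; ring
  have S5 : x^4 * F x m = ∑ j ∈ range (m+3),
      (if j ≤ 1 then 0 else ((m).choose (j-2) : ℝ)^2) * (x^(2*j) * (1-x)^(2*(m+2-j))) := by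
    unfold F bb
    conv_rhs => rw [Finset.sum_range_succ' (fun j => (if j ≤ 1 then (0:ℝ) else ((m).choose (j-2) : ℝ)^2) * (x^(2*j) * (1-x)^(2*(m+2-j)))) (m+2)]
    conv_rhs => rw [Finset.sum_range_succ' (fun j => (if j+1 ≤ 1 then (0:ℝ) else ((m).choose (j+1-2) : ℝ)^2) * (x^(2*(j+1)) * (1-x)^(2*(m+2-(j+1))))) (m+1)]
    simp only [show ∀ j : ℕ, ¬(j+1+1 ≤ 1) from fun j => by omega, show (0+1 : ℕ) ≤ 1 from by omega,
      if_true, if_false, ite_true, ite_false, reduceIte, zero_mul, add_zero,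
      show (0:ℕ) ≤ 1 from by omega]
    rw [Finset.mul_sum]
    refine Finset.sum_congr rfl fun k _ => ?_
    rw [show k+1+1-2 = k by omega, show m+2-(k+1+1) = m-k by omega]
    ring
  have expand : ((1-x)^2 - x^2)^2 * (((m:ℝ)+1) * F x m)
      = ((m:ℝ)+1)*((1-x)^4*F x m) - 2*((m:ℝ)+1)*(x^2*(1-x)^2*F x m) + ((m:ℝ)+1)*(x^4*F x m) := by
    ring
  have expand2 : ((1-x)^2 + x^2) * ((2*(m:ℝ)+3) * F x (m+1))
      = (2*(m:ℝ)+3)*((1-x)^2*F x (m+1)) + (2*(m:ℝ)+3)*(x^2*F x (m+1)) := by ring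
  rw [expand, expand2, S0, S1, S2, S3, S4, S5, Finset.mul_sum, Finset.mul_sum, Finset.mul_sum,
    Finset.mul_sum, Finset.mul_sum, Finset.mul_sum, ← Finset.sum_add_distrib, ← Finset.sum_sub_distrib,
    ← Finset.sum_add_distrib, ← Finset.sum_sub_distrib]
  refine Finset.sum_congr rfl fun j _ => ?_
  rcases j with _ | j
  · norm_num
    push_cast
    ring
  rcases j with _ | k
  · norm_num [Nat.choose_one_right, Nat.choose_zero_right]
    push_cast
    ring
  · simp only [Nat.succ_ne_zero, if_false, ite_false, reduceIte, show ¬(k+1+1 ≤ 1) from by omega,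
      show k+1+1-1 = k+1 from by omega, show k+1+1-2 = k from by omega]
    linear_combination (x ^ (2*(k+1+1)) * (1-x) ^ (2*(m+2-(k+1+1)))) * rec_coeff m k


noncomputable def aa (x : ℝ) : ℝ := (1-x)^2 + x^2
noncomputable def qq (x : ℝ) : ℝ := ((1-x)^2 - x^2)^2

lemma F_rec' (x : ℝ) (m : ℕ) :
    ((m:ℝ)+2) * F x (m+2) = aa x * ((2*(m:ℝ)+3) * F x (m+1)) - qq x * (((m:ℝ)+1) * F x m) :=
  F_rec x m

lemma F_zero (x : ℝ) : F x 0 = 1 := by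
  unfold F bb; simp

lemma F_one (x : ℝ) : F x 1 = aa x := by
  unfold F bb aa
  rw [Finset.sum_range_succ, Finset.sum_range_succ, Finset.sum_range_zero]
  norm_num

lemma F_nonneg (x : ℝ) (m : ℕ) : 0 ≤ F x m :=
  Finset.sum_nonneg fun _ _ => sq_nonneg _

lemma F_pos (x : ℝ) (hx0 : 0 ≤ x) (hx1 : x ≤ 1) (m : ℕ) : 0 < F x m := by
  rcases le_total x (1/2) with h | h
  · have hy : 0 < 1 - x := by linarith
    have h1 : 0 < ((1-x)^m)^2 := by positivity
    have h2 : bb x m 0 ^ 2 = ((1-x)^m)^2 := by unfold bb; norm_num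
    calc (0:ℝ) < ((1-x)^m)^2 := h1
    _ = bb x m 0 ^2 := h2.symm
    _ ≤ F x m := Finset.single_le_sum (fun i _ => sq_nonneg (bb x m i))
        (Finset.mem_range.mpr (by omega))
  · have hxpos : 0 < x := by linarith
    have h1 : 0 < (x^m)^2 := by positivity
    have h2 : bb x m m ^ 2 = (x^m)^2 := by unfold bb; simp
    calc (0:ℝ) < (x^m)^2 := h1
    _ = bb x m m ^2 := h2.symm
    _ ≤ F x m := Finset.single_le_sum (fun i _ => sq_nonneg (bb x m i))
        (Finset.mem_range.mpr (by omega))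

lemma aa_pos (x : ℝ) : 0 < aa x := by unfold aa; nlinarith [sq_nonneg (1-2*x), sq_nonneg x, sq_nonneg (1-x)]

lemma aa_le_one (x : ℝ) (hx0 : 0 ≤ x) (hx1 : x ≤ 1) : aa x ≤ 1 := by unfold aa; nlinarith

lemma qq_nonneg (x : ℝ) : 0 ≤ qq x := sq_nonneg _

lemma qq_le_sq_aa (x : ℝ) : qq x ≤ aa x ^ 2 := by
  unfold aa qq; nlinarith [sq_nonneg (x*(1-x))]

lemma one_sub_aa (x : ℝ) : (1 - aa x)^2 = aa x ^2 - qq x := by unfold aa qq; ring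

lemma two_aa (x : ℝ) : 2 * aa x = 1 + qq x := by unfold aa qq; ring

lemma qq_le_one (x : ℝ) (hx0 : 0 ≤ x) (hx1 : x ≤ 1) : qq x ≤ 1 := by
  unfold qq; nlinarith

/-- joint invariants -/
lemma invariants (x : ℝ) (hx0 : 0 ≤ x) (hx1 : x ≤ 1) (m : ℕ) :
    qq x * F x m ≤ aa x * F x (m+1) ∧ aa x * F x m ≤ F x (m+1) ∧ F x (m+1) ≤ F x m ∧
    qq x * ((m:ℝ)+1) * F x m^2 + ((m:ℝ)+2) * F x (m+1)^2 ≤ aa x * (2*(m:ℝ)+3) * F x (m+1) * F x m := by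
  have haq := qq_le_sq_aa x
  have hq0 := qq_nonneg x
  have ha0 := aa_pos x
  have ha1 := aa_le_one x hx0 hx1
  have hq1 := qq_le_one x hx0 hx1
  induction m with
  | zero =>
    rw [F_zero, F_one]
    norm_num
    refine ⟨by nlinarith, by nlinarith, by nlinarith⟩
  | succ m ih =>
    obtain ⟨K, L, U, T⟩ := ih
    have hrec := F_rec' x m
    have hF0 := F_nonneg x m
    have hF1 := F_nonneg x (m+1)
    have hF2 := F_nonneg x (m+2)
    have hm : (0:ℝ) ≤ (m:ℝ) := Nat.cast_nonneg m
    have hpos : (0:ℝ) < (m:ℝ)+2 := by positivity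
    -- aux : aa^2 * F (m+1) ≤ aa * F (m+2)
    have hK1 : aa x*(((m:ℝ)+1)*(qq x*F x m)) ≤ aa x*(((m:ℝ)+1)*(aa x*F x (m+1))) :=
      mul_le_mul_of_nonneg_left (mul_le_mul_of_nonneg_left K (by positivity)) ha0.le
    have recA : aa x*(((m:ℝ)+2)*F x (m+2))
        = aa x*(aa x*((2*(m:ℝ)+3)*F x (m+1)) - qq x*(((m:ℝ)+1)*F x m)) := by rw [hrec]
    have d2 : ((m:ℝ)+2)*(aa x^2*F x (m+1)) ≤ ((m:ℝ)+2)*(aa x*F x (m+2)) := by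
      nlinarith [recA, hK1]
    have aux : aa x^2*F x (m+1) ≤ aa x*F x (m+2) := (mul_le_mul_iff_right₀ hpos).mp d2
    have newK : qq x * F x (m+1) ≤ aa x * F x (m+2) := by
      have := mul_le_mul_of_nonneg_right haq hF1
      linarith [aux]
    have newL : aa x * F x (m+1) ≤ F x (m+2) := by
      have h := aux
      rw [pow_two, mul_assoc] at h
      exact (mul_le_mul_iff_right₀ ha0).mp h
    have newU : F x (m+2) ≤ F x (m+1) := by
      have h2a := two_aa x
      have hqF : qq x*(((m:ℝ)+1)*F x (m+1)) ≤ qq x*(((m:ℝ)+1)*F x m) :=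
        mul_le_mul_of_nonneg_left (mul_le_mul_of_nonneg_left U (by positivity)) hq0
      have h6 : 2*(aa x*((2*(m:ℝ)+3)*F x (m+1))) = (1+qq x)*((2*(m:ℝ)+3)*F x (m+1)) := by
        linear_combination ((2*(m:ℝ)+3)*F x (m+1)) * h2a
      have h7 : qq x*F x (m+1) ≤ F x (m+1) := by nlinarith [hq1, hF1]
      have h5 : ((m:ℝ)+2)*F x (m+2) ≤ ((m:ℝ)+2)*F x (m+1) := by
        nlinarith [hrec, hqF, h6, h7]
      exact (mul_le_mul_iff_right₀ hpos).mp h5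
    have step1 : ((m:ℝ)+2) * (aa x * (2*(m:ℝ)+3) * F x (m+2) * F x (m+1)
          - qq x * ((m:ℝ)+1) * F x (m+1)^2 - ((m:ℝ)+2) * F x (m+2)^2)
        = qq x * ((m:ℝ)+1) * (aa x * (2*(m:ℝ)+3) * F x (m+1) * F x m
          - qq x * ((m:ℝ)+1) * F x m^2 - ((m:ℝ)+2) * F x (m+1)^2) := by
      linear_combination (qq x * ((m:ℝ)+1) * F x m - ((m:ℝ)+2) * F x (m+2)) * hrec
    have hH : 0 ≤ aa x * (2*(m:ℝ)+3) * F x (m+1) * F x m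
        - qq x * ((m:ℝ)+1) * F x m^2 - ((m:ℝ)+2) * F x (m+1)^2 := by linarith [T]
    have h8 : 0 ≤ qq x * ((m:ℝ)+1) * (aa x * (2*(m:ℝ)+3) * F x (m+1) * F x m
          - qq x * ((m:ℝ)+1) * F x m^2 - ((m:ℝ)+2) * F x (m+1)^2) :=
      mul_nonneg (mul_nonneg hq0 (by positivity)) hH
    have h9 : 0 ≤ ((m:ℝ)+2) * (aa x * (2*(m:ℝ)+3) * F x (m+2) * F x (m+1)
          - qq x * ((m:ℝ)+1) * F x (m+1)^2 - ((m:ℝ)+2) * F x (m+2)^2) := by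
      rw [step1]; exact h8
    have hH' : 0 ≤ aa x * (2*(m:ℝ)+3) * F x (m+2) * F x (m+1)
        - qq x * ((m:ℝ)+1) * F x (m+1)^2 - ((m:ℝ)+2) * F x (m+2)^2 :=
      (mul_nonneg_iff_of_pos_left hpos).mp h9
    have hsq : (F x (m+2) - aa x * F x (m+1))^2 ≤ (aa x^2 - qq x) * F x (m+1)^2 := by
      have h1 : 0 ≤ F x (m+2) - aa x * F x (m+1) := by linarith [newL]
      have h2 : F x (m+2) - aa x * F x (m+1) ≤ (1 - aa x) * F x (m+1) := by nlinarith [newU]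
      have h4 : (F x (m+2) - aa x*F x (m+1))^2 ≤ ((1-aa x)*F x (m+1))^2 :=
        pow_le_pow_left₀ h1 h2 2
      have h5 : ((1-aa x)*F x (m+1))^2 = (aa x^2 - qq x)*F x (m+1)^2 := by
        rw [mul_pow, one_sub_aa]
      linarith [h4, h5]
    have newT : qq x * ((m:ℝ)+1+1) * F x (m+1)^2 + ((m:ℝ)+1+2) * F x (m+2)^2
        ≤ aa x * (2*((m:ℝ)+1)+3) * F x (m+2) * F x (m+1) := by
      linarith [hH', hsq]
    refine ⟨newK, newL, newU, ?_⟩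
    push_cast
    linarith [newT]

lemma lcx (x : ℝ) (hx0 : 0 ≤ x) (hx1 : x ≤ 1) (m : ℕ) :
    F x (m+1)^2 ≤ F x m * F x (m+2) := by
  obtain ⟨-, -, -, T⟩ := invariants x hx0 hx1 m
  have hrec := F_rec' x m
  have h2 : ((m:ℝ)+2) * (F x m * F x (m+2)) =
      aa x * (2*(m:ℝ)+3) * F x (m+1) * F x m - qq x * ((m:ℝ)+1) * F x m^2 := by
    linear_combination (F x m) * hrec
  have h3 : 0 ≤ ((m:ℝ)+2) * (F x m * F x (m+2) - F x (m+1)^2) := by linarith [h2, T]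
  have h4 : (0:ℝ) < (m:ℝ)+2 := by positivity
  have := (mul_nonneg_iff_of_pos_left h4).mp h3
  linarith [this]

lemma ratio_mono (x : ℝ) (hx0 : 0 ≤ x) (hx1 : x ≤ 1) (i : ℕ) :
    ∀ j, i ≤ j → F x (i+1) * F x j ≤ F x i * F x (j+1) := by
  refine Nat.le_induction (by rw [mul_comm]) ?_
  intro j hij IH
  have hlcx := lcx x hx0 hx1 j
  have hFj := F_pos x hx0 hx1 j
  have h1 : F x i * F x (j+1)^2 ≤ F x i * (F x j * F x (j+2)) :=
    mul_le_mul_of_nonneg_left hlcx (F_nonneg x i)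
  have h2 : (F x (i+1) * F x j) * F x (j+1) ≤ (F x i * F x (j+1)) * F x (j+1) :=
    mul_le_mul_of_nonneg_right IH (F_nonneg x (j+1))
  have h3 : F x j * (F x (i+1) * F x (j+1)) ≤ F x j * (F x i * F x (j+2)) := by nlinarith [h1, h2]
  exact le_of_mul_le_mul_left h3 hFj

lemma LC (x : ℝ) (hx0 : 0 ≤ x) (hx1 : x ≤ 1) :
    ∀ d i, F x (i+d)^2 ≤ F x i * F x (i+2*d) := by
  intro d
  induction d with
  | zero => intro i; simp only [Nat.add_zero, Nat.mul_zero]; exact le_of_eq (pow_two _)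
  | succ d ih =>
    intro i
    have e1 : i + (d+1) = (i+1) + d := by omega
    have h1 : F x ((i+1)+d)^2 ≤ F x (i+1) * F x ((i+1)+2*d) := ih (i+1)
    have h2 := ratio_mono x hx0 hx1 i (i+2*d+1) (by omega)
    rw [e1]
    calc F x ((i+1)+d)^2 ≤ F x (i+1) * F x ((i+1)+2*d) := h1
    _ = F x (i+1) * F x (i+2*d+1) := by rw [show (i+1)+2*d = i+2*d+1 from by omega]
    _ ≤ F x i * F x (i+2*d+1+1) := h2
    _ = F x i * F x (i+2*(d+1)) := by rw [show i+2*d+1+1 = i+2*(d+1) from by omega]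


noncomputable def DD (x : ℝ) (N : ℕ) : ℝ := ∑ m ∈ range (N+1), F x m * F x (N-m)

lemma DD_rec (x : ℝ) (N : ℕ) : DD x (N+2) = 2*aa x*DD x (N+1) - qq x*DD x N := by
  have e1' : ∑ j ∈ range (N+3), (((N:ℝ)+2)-(j:ℝ))*(F x j * F x (N+2-j))
      = ∑ j ∈ range (N+3), (j:ℝ)*(F x j * F x (N+2-j)) := by
    rw [← Finset.sum_range_reflect (fun m => ((m:ℝ))*(F x m * F x (N+2-m))) (N+3)]
    refine Finset.sum_congr rfl fun j hj => ?_
    have hj' : j ≤ N+2 := Nat.lt_succ_iff.mp (Finset.mem_range.mp hj)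
    rw [show N+3-1-j = N+2-j from by omega, show N+2-(N+2-j) = j from by omega,
        Nat.cast_sub (by omega : j ≤ N+2)]
    push_cast
    ring
  have key0 : ((N:ℝ)+2) * DD x (N+2) = 2 * ∑ m ∈ range (N+3), (m:ℝ)*(F x m * F x (N+2-m)) := by
    simp only [DD]
    rw [Finset.mul_sum]
    calc ∑ m ∈ range (N+3), ((N:ℝ)+2) * (F x m * F x (N+2-m))
        = ∑ m ∈ range (N+3), ((m:ℝ)*(F x m * F x (N+2-m)) + (((N:ℝ)+2)-(m:ℝ))*(F x m * F x (N+2-m))) := by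
          exact Finset.sum_congr rfl fun m _ => by ring
      _ = (∑ m ∈ range (N+3), (m:ℝ)*(F x m * F x (N+2-m)))
          + ∑ m ∈ range (N+3), (((N:ℝ)+2)-(m:ℝ))*(F x m * F x (N+2-m)) := Finset.sum_add_distrib
      _ = 2 * ∑ m ∈ range (N+3), (m:ℝ)*(F x m * F x (N+2-m)) := by rw [e1']; ring
  have keyB : ∑ m ∈ range (N+3), (m:ℝ)*(F x m * F x (N+2-m))
      = ∑ m ∈ range (N+2), ((m:ℝ)+1)*(F x (m+1) * F x (N+1-m)) := by
    rw [Finset.sum_range_succ' (fun m => (m:ℝ)*(F x m * F x (N+2-m))) (N+2)]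
    simp only [Nat.cast_zero, zero_mul, add_zero]
    refine Finset.sum_congr rfl fun m _ => ?_
    rw [show N+2-(m+1) = N+1-m from by omega]
    push_cast
    ring
  have keyC : ∑ m ∈ range (N+2), ((m:ℝ)+1)*(F x (m+1) * F x (N+1-m))
      = (∑ m ∈ range (N+1), ((m:ℝ)+2)*(F x (m+2) * F x (N-m))) + aa x * F x (N+1) := by
    rw [Finset.sum_range_succ' (fun m => ((m:ℝ)+1)*(F x (m+1) * F x (N+1-m))) (N+1)]
    congr 1
    · refine Finset.sum_congr rfl fun m _ => ?_
      rw [show N+1-(m+1) = N-m from by omega]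
      push_cast
      ring
    · rw [F_one]
      push_cast
      ring
  have keyD : ∑ m ∈ range (N+1), ((m:ℝ)+2)*(F x (m+2) * F x (N-m))
      = aa x * (∑ m ∈ range (N+1), (2*(m:ℝ)+3)*(F x (m+1) * F x (N-m)))
        - qq x * (∑ m ∈ range (N+1), ((m:ℝ)+1)*(F x m * F x (N-m))) := by
    rw [Finset.mul_sum, Finset.mul_sum, ← Finset.sum_sub_distrib]
    refine Finset.sum_congr rfl fun m _ => ?_
    linear_combination (F x (N-m)) * (F_rec' x m)
  have hrA : ∑ m ∈ range (N+1), (((N:ℝ)-(m:ℝ))+1)*(F x m * F x (N-m))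
      = ∑ m ∈ range (N+1), ((m:ℝ)+1)*(F x m * F x (N-m)) := by
    rw [← Finset.sum_range_reflect (fun m => ((m:ℝ)+1)*(F x m * F x (N-m))) (N+1)]
    refine Finset.sum_congr rfl fun m hm => ?_
    have hm' : m ≤ N := Nat.lt_succ_iff.mp (Finset.mem_range.mp hm)
    rw [show N+1-1-m = N-m from by omega, show N-(N-m) = m from by omega, Nat.cast_sub hm']
    ring
  have avg1 : 2 * ∑ m ∈ range (N+1), ((m:ℝ)+1)*(F x m * F x (N-m)) = ((N:ℝ)+2) * DD x N := by
    simp only [DD]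
    calc 2 * ∑ m ∈ range (N+1), ((m:ℝ)+1)*(F x m * F x (N-m))
        = (∑ m ∈ range (N+1), ((m:ℝ)+1)*(F x m * F x (N-m)))
          + ∑ m ∈ range (N+1), (((N:ℝ)-(m:ℝ))+1)*(F x m * F x (N-m)) := by rw [hrA]; ring
      _ = ∑ m ∈ range (N+1), (((m:ℝ)+1) + (((N:ℝ)-(m:ℝ))+1))*(F x m * F x (N-m)) := by
          rw [← Finset.sum_add_distrib]
          exact Finset.sum_congr rfl fun m _ => by ring
      _ = ((N:ℝ)+2) * ∑ m ∈ range (N+1), F x m * F x (N-m) := by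
          rw [Finset.mul_sum]
          exact Finset.sum_congr rfl fun m _ => by ring
  have hrB : ∑ k ∈ range (N+2), ((2*((N:ℝ)+1-(k:ℝ)))+1)*(F x k * F x (N+1-k))
      = ∑ k ∈ range (N+2), (2*(k:ℝ)+1)*(F x k * F x (N+1-k)) := by
    rw [← Finset.sum_range_reflect (fun k => (2*(k:ℝ)+1)*(F x k * F x (N+1-k))) (N+2)]
    refine Finset.sum_congr rfl fun k hk => ?_
    have hk' : k ≤ N+1 := Nat.lt_succ_iff.mp (Finset.mem_range.mp hk)
    rw [show N+2-1-k = N+1-k from by omega, show N+1-(N+1-k) = k from by omega,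
        Nat.cast_sub (by omega : k ≤ N+1)]
    push_cast
    ring
  have avg2 : 2 * ∑ k ∈ range (N+2), (2*(k:ℝ)+1)*(F x k * F x (N+1-k))
      = (2*(N:ℝ)+4) * DD x (N+1) := by
    simp only [DD]
    calc 2 * ∑ k ∈ range (N+2), (2*(k:ℝ)+1)*(F x k * F x (N+1-k))
        = (∑ k ∈ range (N+2), (2*(k:ℝ)+1)*(F x k * F x (N+1-k)))
          + ∑ k ∈ range (N+2), ((2*((N:ℝ)+1-(k:ℝ)))+1)*(F x k * F x (N+1-k)) := by rw [hrB]; ring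
      _ = ∑ k ∈ range (N+2), ((2*(k:ℝ)+1) + ((2*((N:ℝ)+1-(k:ℝ)))+1))*(F x k * F x (N+1-k)) := by
          rw [← Finset.sum_add_distrib]
          exact Finset.sum_congr rfl fun k _ => by ring
      _ = (2*(N:ℝ)+4) * ∑ m ∈ range (N+1+1), F x m * F x (N+1-m) := by
          rw [Finset.mul_sum]
          exact Finset.sum_congr rfl fun k _ => by ring
  have shift2 : ∑ m ∈ range (N+1), (2*(m:ℝ)+3)*(F x (m+1) * F x (N-m))
      = (∑ k ∈ range (N+2), (2*(k:ℝ)+1)*(F x k * F x (N+1-k))) - F x (N+1) := by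
    rw [Finset.sum_range_succ' (fun k => (2*(k:ℝ)+1)*(F x k * F x (N+1-k))) (N+1)]
    rw [show ((2*((0:ℕ):ℝ)+1)*(F x 0 * F x (N+1-0)) = F x (N+1)) from by rw [F_zero]; push_cast; ring]
    rw [add_sub_cancel_right]
    refine Finset.sum_congr rfl fun m _ => ?_
    rw [show N+1-(m+1) = N-m from by omega]
    push_cast
    ring
  -- assemble
  have main : ((N:ℝ)+2) * DD x (N+2) = ((N:ℝ)+2) * (2*aa x*DD x (N+1) - qq x*DD x N) := by
    rw [key0, keyB, keyC, keyD, shift2]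
    linear_combination (aa x) * avg2 - (qq x) * avg1
  exact mul_left_cancel₀ (by positivity) main

lemma DD_geom (x : ℝ) (N : ℕ) : DD x N = ∑ i ∈ range (N+1), (qq x)^i := by
  induction N using Nat.twoStepInduction with
  | zero =>
    simp only [DD]
    rw [Finset.sum_range_one, Finset.sum_range_one]
    simp [F_zero]
  | one =>
    simp only [DD, Finset.sum_range_succ, Finset.sum_range_zero, F_zero, F_one]
    norm_num [F_zero, F_one]
    linarith [two_aa x]
  | more n ih1 ih2 =>
    rw [DD_rec, ih1, ih2]
    rw [Finset.sum_range_succ (fun i => qq x^i) (n+1+1), Finset.sum_range_succ (fun i => qq x^i) (n+1)]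
    linear_combination ((∑ i ∈ range (n+1), qq x^i) + qq x^(n+1)) * two_aa x
  

lemma poly (q : ℝ) (hq0 : 0 ≤ q) (hq1 : q ≤ 1) (n : ℕ) (hn : 1 ≤ n) :
    (∑ i ∈ range (2*n+1), q^i) * (1 + ((n:ℝ)-1)*(1-q)) ≤ 2*(n:ℝ)+1 := by
  have hS1 : ∑ i ∈ range (2*n+1), q^i = 1 + ∑ i ∈ range (2*n), q^(i+1) := by
    rw [Finset.sum_range_succ' (fun i => q^i) (2*n), pow_zero]
    ring
  have pair : ∀ i ∈ range (2*n), q^(i+1) + q^(2*n-i) ≤ q + q^(2*n) := by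
    intro i hi
    have hi' : i < 2*n := Finset.mem_range.mp hi
    have h1 : 0 ≤ 1 - q^i := by
      have := pow_le_one₀ hq0 hq1 (n := i)
      linarith
    have h2 : 0 ≤ q - q^((2*n-1-i)+1) := by
      have : q^((2*n-1-i)+1) ≤ q^1 := pow_le_pow_of_le_one hq0 hq1 (by omega)
      simpa using this
    have key := mul_nonneg h1 h2
    have expand : (1 - q^i)*(q - q^((2*n-1-i)+1))
        = q + q^(i+(2*n-1-i)+1) - q^(i+1) - q^((2*n-1-i)+1) := by ring
    rw [expand, show i+(2*n-1-i)+1 = 2*n from by omega] at key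
    rw [show 2*n-i = (2*n-1-i)+1 from by omega]
    linarith [key]
  have hrefl : ∑ i ∈ range (2*n), q^(2*n-i) = ∑ i ∈ range (2*n), q^(i+1) := by
    rw [← Finset.sum_range_reflect (fun i => q^(i+1)) (2*n)]
    refine Finset.sum_congr rfl fun i hi => ?_
    have hi' : i < 2*n := Finset.mem_range.mp hi
    rw [show (2*n-1-i)+1 = 2*n-i from by omega]
  have hsum : 2*(∑ i ∈ range (2*n), q^(i+1)) ≤ 2*(n:ℝ)*(q + q^(2*n)) := by
    have h := Finset.sum_le_sum pair
    rw [Finset.sum_add_distrib, hrefl, Finset.sum_const, Finset.card_range, nsmul_eq_mul] at h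
    push_cast at h
    linarith [h]
  have e3 : ((n:ℝ)-1)*((∑ i ∈ range (2*n+1), q^i)*(q-1)) = ((n:ℝ)-1)*(q^(2*n+1)-1) := by
    rw [geom_sum_mul q (2*n+1)]
  have hZ1 : q^(2*n) ≤ 1 := pow_le_one₀ hq0 hq1
  have hZ0 : 0 ≤ q^(2*n) := pow_nonneg hq0 _
  have hW1 : q^(2*n+1) ≤ 1 := pow_le_one₀ hq0 hq1
  have hn' : (1:ℝ) ≤ n := by exact_mod_cast hn
  have e4 : 0 ≤ (n:ℝ)*((1-q)*(1-q^(2*n))) :=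
    mul_nonneg (by linarith) (mul_nonneg (by linarith) (by linarith))
  have hqz : q^(2*n+1) = q^(2*n)*q := by ring
  rw [hqz] at e3 hW1
  linarith [hS1, hsum, e3, e4, hW1]


end Stmt16

open Stmt16 Finset in
/-- For `n ≥ 1` and `x ∈ [0,1]`, `F_n(x) ≤ 1/√(1+4(n-1)x(1-x))`. -/
theorem stmt_16 (n : ℕ) (hn : 1 ≤ n) (x : ℝ) (hx : x ∈ Set.Icc (0:ℝ) 1) :
    (∑ k ∈ Finset.range (n + 1), (n.choose k : ℝ) ^ 2 * x ^ (2 * k) * (1 - x) ^ (2 * (n - k))) ≤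
      1 / Real.sqrt (1 + 4 * ((n : ℝ) - 1) * x * (1 - x)) := by
  obtain ⟨hx0, hx1⟩ := hx
  have hq0 := qq_nonneg x
  have hq1 := qq_le_one x hx0 hx1
  have hFeq : F x n = ∑ k ∈ Finset.range (n+1), (n.choose k:ℝ)^2 * x^(2*k) * (1-x)^(2*(n-k)) := by
    unfold F bb
    exact Finset.sum_congr rfl fun k _ => by ring
  have hterm : ∀ m ∈ range (2*n+1), F x n^2 ≤ F x m * F x (2*n-m) := by
    intro m hm
    have hm' : m ≤ 2*n := Nat.lt_succ_iff.mp (Finset.mem_range.mp hm)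
    rcases le_or_gt m n with h | h
    · have := LC x hx0 hx1 (n-m) m
      rw [show m+(n-m) = n from by omega, show m+2*(n-m) = 2*n-m from by omega] at this
      exact this
    · have := LC x hx0 hx1 (m-n) (2*n-m)
      rw [show (2*n-m)+(m-n) = n from by omega, show (2*n-m)+2*(m-n) = m from by omega] at this
      calc F x n^2 ≤ F x (2*n-m) * F x m := this
      _ = F x m * F x (2*n-m) := mul_comm _ _
  have hsum : (2*(n:ℝ)+1) * F x n^2 ≤ ∑ i ∈ range (2*n+1), (qq x)^i := by
    calc (2*(n:ℝ)+1) * F x n^2 = ∑ _m ∈ range (2*n+1), F x n^2 := by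
          rw [Finset.sum_const, Finset.card_range]; push_cast; ring
      _ ≤ ∑ m ∈ range (2*n+1), F x m * F x (2*n-m) := Finset.sum_le_sum hterm
      _ = DD x (2*n) := by simp only [DD]
      _ = ∑ i ∈ range (2*n+1), (qq x)^i := DD_geom x (2*n)
  have hpoly := poly (qq x) hq0 hq1 n hn
  have hn' : (1:ℝ) ≤ n := by exact_mod_cast hn
  have hT1 : 1 ≤ 1 + ((n:ℝ)-1)*(1-qq x) := by nlinarith [hq1, hn']
  have hTpos : (0:ℝ) < 1 + ((n:ℝ)-1)*(1-qq x) := by linarith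
  have hS0 : (0:ℝ) ≤ ∑ i ∈ range (2*n+1), (qq x)^i :=
    Finset.sum_nonneg fun i _ => pow_nonneg hq0 i
  have h2 : (2*(n:ℝ)+1) * (F x n^2 * (1 + ((n:ℝ)-1)*(1-qq x))) ≤ (2*(n:ℝ)+1) * 1 := by
    have hmul := mul_le_mul_of_nonneg_right hsum hTpos.le
    nlinarith [hmul, hpoly]
  have h3 : (0:ℝ) < 2*(n:ℝ)+1 := by positivity
  have hF2T : F x n^2 * (1 + ((n:ℝ)-1)*(1-qq x)) ≤ 1 := (mul_le_mul_iff_right₀ h3).mp h2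
  have hsq : F x n^2 ≤ 1/(1 + ((n:ℝ)-1)*(1-qq x)) := by
    rw [le_div_iff₀ hTpos]; exact hF2T
  have final : F x n ≤ 1/Real.sqrt (1 + ((n:ℝ)-1)*(1-qq x)) := by
    have hmono := Real.sqrt_le_sqrt hsq
    rw [Real.sqrt_sq (F_nonneg x n)] at hmono
    rw [one_div, Real.sqrt_inv, ← one_div] at hmono
    exact hmono
  have hTtarget : 1 + ((n:ℝ)-1)*(1-qq x) = 1 + 4*((n:ℝ)-1)*x*(1-x) := by
    unfold qq; ring
  rw [← hTtarget, ← hFeq]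
  exact final
end

section
/- Let $n\in\mathbb{N}$, $n\ge2$, and define $F_n(x)=\sum_{k=0}^{n}\binom{n}{k}^2 x^{2k}(1-x)^{2(n-k)}$. Then for every $x\in[0,1]$, $F_n(x)\le\big(1+4(n-1)x(1-x)\big)^{-\frac{n}{2(n-1)}}$. -/
open scoped BigOperators

open Finset

noncomputable def bp (l : ℕ) (x : ℝ) (k : ℕ) : ℝ :=
  (l.choose k : ℝ) * x ^ k * (1 - x) ^ (l - k)

noncomputable def AA (l : ℕ) (x : ℝ) : ℝ := ∑ k ∈ range (l+1), (bp l x k)^2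
noncomputable def BB (l : ℕ) (x : ℝ) : ℝ := ∑ k ∈ range (l+1), bp l x k * bp l x (k+1)
noncomputable def CC (l : ℕ) (x : ℝ) : ℝ := ∑ k ∈ range (l+1), bp l x k * bp l x (k+2)

lemma bp_eq_zero {l k : ℕ} (h : l < k) (x : ℝ) : bp l x k = 0 := by
  simp [bp, Nat.choose_eq_zero_of_lt h]

lemma pascal_succ (l k : ℕ) (x : ℝ) :
    bp (l+1) x (k+1) = x * bp l x k + (1-x) * bp l x (k+1) := by
  rcases le_or_gt (k+1) l with h | h
  · have h1 : l + 1 - (k+1) = l - k := by omega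
    have h2 : l - k = (l - (k+1)) + 1 := by omega
    unfold bp
    rw [Nat.choose_succ_succ l k, h1, h2]
    push_cast
    ring
  · rcases eq_or_lt_of_le (Nat.lt_iff_add_one_le.mp h) with h' | h'
    · -- k = l
      have hk : k = l := by omega
      subst hk
      unfold bp
      simp [Nat.choose_succ_self, Nat.choose_self, Nat.sub_self, pow_succ]
      ring
    · -- l < k
      rw [bp_eq_zero (by omega : l + 1 < k + 1), bp_eq_zero (by omega : l < k),
        bp_eq_zero (by omega : l < k + 1)]
      ring

lemma pascal_zero (l : ℕ) (x : ℝ) : bp (l+1) x 0 = (1-x) * bp l x 0 := by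
  unfold bp
  simp [pow_succ]
  ring

lemma sum_shift_sq (l : ℕ) (x : ℝ) :
    ∑ k ∈ range (l+1), (bp l x (k+1))^2 = AA l x - (bp l x 0)^2 := by
  have h := Finset.sum_range_succ' (fun k => (bp l x k)^2) (l+1)
  rw [Finset.sum_range_succ (fun k => (bp l x k)^2) (l+1)] at h
  rw [bp_eq_zero (by omega : l < l+1)] at h
  have : AA l x + 0^2 = ∑ k ∈ range (l+1), (bp l x (k+1))^2 + (bp l x 0)^2 := h
  linarith [this]

lemma sum_shift_mul (l : ℕ) (x : ℝ) :
    ∑ k ∈ range (l+1), bp l x (k+1) * bp l x (k+2) = BB l x - bp l x 0 * bp l x 1 := by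
  have h := Finset.sum_range_succ' (fun k => bp l x k * bp l x (k+1)) (l+1)
  rw [Finset.sum_range_succ (fun k => bp l x k * bp l x (k+1)) (l+1)] at h
  rw [bp_eq_zero (by omega : l < l+1+1)] at h
  have : BB l x + bp l x (l+1) * 0 = ∑ k ∈ range (l+1), bp l x (k+1) * bp l x (k+2) + bp l x 0 * bp l x 1 := h
  linarith [this]

lemma sum_shift_sq2 (l : ℕ) (x : ℝ) :
    ∑ k ∈ range (l+1), (bp l x (k+2))^2 = AA l x - (bp l x 0)^2 - (bp l x 1)^2 := by
  have h := Finset.sum_range_succ' (fun k => (bp l x (k+1))^2) (l+1)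
  rw [Finset.sum_range_succ (fun k => (bp l x (k+1))^2) (l+1)] at h
  rw [bp_eq_zero (by omega : l < l+1+1)] at h
  rw [sum_shift_sq l x] at h
  have : AA l x - (bp l x 0)^2 + 0^2
      = ∑ k ∈ range (l+1), (bp l x (k+2))^2 + (bp l x 1)^2 := h
  linarith [this]

lemma AA_succ (l : ℕ) (x : ℝ) :
    AA (l+1) x = (1 - 2*(x*(1-x))) * AA l x + 2*(x*(1-x)) * BB l x := by
  have expand : ∀ k ∈ range (l+1), (bp (l+1) x (k+1))^2
      = x^2*(bp l x k)^2 + 2*x*(1-x)*(bp l x k * bp l x (k+1)) + (1-x)^2*(bp l x (k+1))^2 := by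
    intro k _
    rw [pascal_succ]; ring
  have h : AA (l+1) x = (bp (l+1) x 0)^2 + ∑ k ∈ range (l+1), (bp (l+1) x (k+1))^2 := by
    rw [AA, Finset.sum_range_succ' (fun k => (bp (l+1) x k)^2) (l+1)]; ring
  rw [h, Finset.sum_congr rfl expand, pascal_zero]
  rw [Finset.sum_add_distrib, Finset.sum_add_distrib, ← Finset.mul_sum, ← Finset.mul_sum,
    ← Finset.mul_sum, sum_shift_sq]
  show (( 1-x) * bp l x 0)^2 + (x^2 * AA l x + 2*x*(1-x) * BB l x + (1-x)^2*(AA l x - (bp l x 0)^2)) = _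
  ring

lemma BB_succ (l : ℕ) (x : ℝ) :
    BB (l+1) x = (1 - 2*(x*(1-x))) * BB l x + (x*(1-x)) * (AA l x + CC l x) := by
  have expand : ∀ k ∈ range (l+1), bp (l+1) x (k+1) * bp (l+1) x (k+2)
      = x^2*(bp l x k * bp l x (k+1)) + x*(1-x)*(bp l x k * bp l x (k+2))
        + x*(1-x)*(bp l x (k+1))^2 + (1-x)^2*(bp l x (k+1) * bp l x (k+2)) := by
    intro k _
    rw [pascal_succ l k x, pascal_succ l (k+1) x]; ring
  have h : BB (l+1) x = bp (l+1) x 0 * bp (l+1) x 1 + ∑ k ∈ range (l+1), (bp (l+1) x (k+1) * bp (l+1) x (k+2)) := by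
    rw [BB, Finset.sum_range_succ' (fun k => bp (l+1) x k * bp (l+1) x (k+1)) (l+1)]; ring
  rw [h, Finset.sum_congr rfl expand]
  rw [Finset.sum_add_distrib, Finset.sum_add_distrib, Finset.sum_add_distrib,
    ← Finset.mul_sum, ← Finset.mul_sum, ← Finset.mul_sum, ← Finset.mul_sum,
    sum_shift_sq, sum_shift_mul]
  have h01 : bp (l+1) x 0 * bp (l+1) x 1 = (1-x) * bp l x 0 * (x * bp l x 0 + (1-x) * bp l x 1) := by
    rw [pascal_zero, show (1:ℕ) = 0 + 1 from rfl, pascal_succ]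
  rw [h01]
  simp only [AA, BB, CC]
  ring

lemma choose_id (l k : ℕ) :
    ((l+1).choose (k+1) : ℝ) * ((l+1).choose (k+2))
      = (l+1) * (((l.choose (k+1) : ℝ))^2 - (l.choose k : ℝ) * (l.choose (k+2) : ℝ)) := by
  rcases lt_or_ge l (k+1) with h | h
  · rw [Nat.choose_eq_zero_of_lt (by omega : l < k+1), Nat.choose_eq_zero_of_lt (by omega : l < k+2),
      Nat.choose_eq_zero_of_lt (by omega : l+1 < k+2)]
    push_cast; ring
  · obtain ⟨e, rfl⟩ : ∃ e, l = k+1+e := ⟨l - (k+1), by omega⟩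
    set L := k+1+e with hL
    -- ℕ facts
    have f1 : (L+1).choose (k+2) * (k+2) = (L+1) * (L.choose (k+1)) := by
      simpa [Nat.succ_eq_add_one] using (Nat.add_one_mul_choose_eq L (k+1)).symm
    have f2 : (L+1).choose (k+1) * (e+1) = (L+1) * (L.choose (k+1)) := by
      have h1 := Nat.choose_succ_right_eq (L+1) (k+1)
      have h2 : L + 1 - (k+1) = e + 1 := by omega
      rw [h2] at h1
      exact h1.symm.trans f1
    have f3 : L.choose (k+2) * (k+2) = L.choose (k+1) * e := by
      have h1 := Nat.choose_succ_right_eq L (k+1)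
      have h2 : L - (k+1) = e := by omega
      rw [h2] at h1; exact h1
    have f4 : L.choose (k+1) * (k+1) = L.choose k * (e+1) := by
      have h1 := Nat.choose_succ_right_eq L k
      have h2 : L - k = e + 1 := by omega
      rw [h2] at h1; exact h1
    have c1 : ((L+1).choose (k+2) : ℝ) * ((k:ℝ)+2) = ((L:ℝ)+1) * (L.choose (k+1) : ℝ) := by
      exact_mod_cast congrArg (Nat.cast : ℕ → ℝ) f1
    have c2 : ((L+1).choose (k+1) : ℝ) * ((e:ℝ)+1) = ((L:ℝ)+1) * (L.choose (k+1) : ℝ) := by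
      exact_mod_cast congrArg (Nat.cast : ℕ → ℝ) f2
    have c3 : (L.choose (k+2) : ℝ) * ((k:ℝ)+2) = (L.choose (k+1) : ℝ) * (e:ℝ) := by
      exact_mod_cast congrArg (Nat.cast : ℕ → ℝ) f3
    have c4 : (L.choose (k+1) : ℝ) * ((k:ℝ)+1) = (L.choose k : ℝ) * ((e:ℝ)+1) := by
      exact_mod_cast congrArg (Nat.cast : ℕ → ℝ) f4
    have hK : ((k:ℝ)+2) * ((e:ℝ)+1) ≠ 0 := by positivity
    apply mul_right_cancel₀ hK
    have hLcast : ((L:ℝ)+1) = (k:ℝ) + (e:ℝ) + 2 := by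
      rw [hL]; push_cast; ring
    rw [hLcast] at c1 c2 ⊢
    linear_combination ((L+1).choose (k+2) : ℝ) * ((k:ℝ)+2) * c2 + (((k:ℝ)+(e:ℝ)+2) * (L.choose (k+1):ℝ)) * c1
      + (((k:ℝ)+(e:ℝ)+2) * (L.choose k : ℝ) * ((e:ℝ)+1)) * c3
      - (((k:ℝ)+(e:ℝ)+2) * (L.choose (k+1):ℝ) * (e:ℝ)) * c4

lemma claimA_term (l k : ℕ) (x : ℝ) :
    bp (l+1) x (k+1) * bp (l+1) x (k+2)
      = ((l:ℝ)+1) * (x*(1-x)) * ((bp l x (k+1))^2 - bp l x k * bp l x (k+2)) := by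
  rcases lt_or_ge l (k+1) with h | h
  · rw [bp_eq_zero (by omega : l+1 < k+2), bp_eq_zero (by omega : l < k+1),
      bp_eq_zero (by omega : l < k+2)]
    ring
  · obtain ⟨e, rfl⟩ : ∃ e, l = k+1+e := ⟨l - (k+1), by omega⟩
    rcases e with _ | e'
    · -- l = k+1
      unfold bp
      rw [Nat.choose_eq_zero_of_lt (by omega : k+1 < k+2)]
      have e1 : k+1+0+1 - (k+1) = 1 := by omega
      have e2 : k+1+0+1 - (k+2) = 0 := by omega
      have e3 : k+1+0 - (k+1) = 0 := by omega
      have c1 : ((k+1+0+1).choose (k+1) : ℝ) = (k:ℝ)+2 := by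
        rw [show k+1+0+1 = (k+1)+1 from by omega, Nat.choose_succ_self_right]
        push_cast; ring
      have c2 : ((k+1+0+1).choose (k+2) : ℝ) = 1 := by
        rw [show k+1+0+1 = k+2 from by omega, Nat.choose_self]; norm_num
      have c3 : ((k+1+0).choose (k+1) : ℝ) = 1 := by
        rw [show k+1+0 = k+1 from by omega, Nat.choose_self]; norm_num
      rw [e1, e2, e3, c1, c2, c3]
      push_cast
      ring
    · -- l = k+2+e'
      have e1 : k+1+(e'+1)+1 - (k+1) = e'+2 := by omega
      have e2 : k+1+(e'+1)+1 - (k+2) = e'+1 := by omega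
      have e3 : k+1+(e'+1) - (k+1) = e'+1 := by omega
      have e4 : k+1+(e'+1) - k = e'+2 := by omega
      have e5 : k+1+(e'+1) - (k+2) = e' := by omega
      have hc := choose_id (k+1+(e'+1)) k
      unfold bp
      rw [e1, e2, e3, e4, e5]
      have hcast : ((k+1+(e'+1)+1 : ℕ) : ℝ) = ((k+1+(e'+1) : ℕ):ℝ) + 1 := by push_cast; ring
      linear_combination (x^(2*k+3)*(1-x)^(2*e'+3)) * hc

lemma BB_claimA (l : ℕ) (x : ℝ) :
    BB (l+1) x = ((l:ℝ)+1) * (x*(1-x)) * (AA l x - CC l x) := by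
  have h : BB (l+1) x = bp (l+1) x 0 * bp (l+1) x 1 + ∑ k ∈ range (l+1), (bp (l+1) x (k+1) * bp (l+1) x (k+2)) := by
    rw [BB, Finset.sum_range_succ' (fun k => bp (l+1) x k * bp (l+1) x (k+1)) (l+1)]; ring
  have expand : ∀ k ∈ range (l+1), bp (l+1) x (k+1) * bp (l+1) x (k+2)
      = ((l:ℝ)+1) * (x*(1-x)) * (bp l x (k+1))^2 - ((l:ℝ)+1) * (x*(1-x)) * (bp l x k * bp l x (k+2)) := by
    intro k _
    rw [claimA_term]; ring
  have h01 : bp (l+1) x 0 * bp (l+1) x 1 = ((l:ℝ)+1) * (x*(1-x)) * (bp l x 0)^2 := by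
    simp [bp, Nat.choose_one_right, pow_succ]
    push_cast
    ring
  rw [h, Finset.sum_congr rfl expand, Finset.sum_sub_distrib, ← Finset.mul_sum, ← Finset.mul_sum,
    sum_shift_sq, h01]
  simp only [AA, CC]
  ring

lemma Q_nonneg (l : ℕ) (x : ℝ) : 0 ≤ AA l x - CC l x := by
  have hid : AA l x - CC l x
      = ((∑ k ∈ range (l+1), (bp l x k - bp l x (k+2))^2) + (bp l x 0)^2 + (bp l x 1)^2)/2 := by
    have expand : ∀ k ∈ range (l+1), (bp l x k - bp l x (k+2))^2
        = (bp l x k)^2 - 2*(bp l x k * bp l x (k+2)) + (bp l x (k+2))^2 := by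
      intro k _; ring
    rw [Finset.sum_congr rfl expand, Finset.sum_add_distrib, Finset.sum_sub_distrib,
      ← Finset.mul_sum, sum_shift_sq2]
    simp only [AA, CC]
    ring
  rw [hid]
  positivity

lemma R_nonneg (l : ℕ) (x : ℝ) : 0 ≤ 3*AA l x - 4*BB l x + CC l x := by
  have hid : 3*AA l x - 4*BB l x + CC l x
      = ((∑ k ∈ range (l+1), (bp l x k - 2*bp l x (k+1) + bp l x (k+2))^2)
          + (2*bp l x 0 - bp l x 1)^2 + (bp l x 0)^2)/2 := by
    have expand : ∀ k ∈ range (l+1), (bp l x k - 2*bp l x (k+1) + bp l x (k+2))^2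
        = (bp l x k)^2 + 4*(bp l x (k+1))^2 + (bp l x (k+2))^2
          - 4*(bp l x k * bp l x (k+1)) - 4*(bp l x (k+1) * bp l x (k+2))
          + 2*(bp l x k * bp l x (k+2)) := by
      intro k _; ring
    rw [Finset.sum_congr rfl expand]
    rw [Finset.sum_add_distrib, Finset.sum_sub_distrib, Finset.sum_sub_distrib,
      Finset.sum_add_distrib, Finset.sum_add_distrib,
      ← Finset.mul_sum, ← Finset.mul_sum, ← Finset.mul_sum, ← Finset.mul_sum,
      sum_shift_sq, sum_shift_sq2, sum_shift_mul]
    simp only [AA, BB, CC]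
    ring
  rw [hid]
  positivity

noncomputable def dbp (l : ℕ) (x : ℝ) (k : ℕ) : ℝ :=
  (l.choose k : ℝ) * ((k:ℝ) * x^(k-1) * (1-x)^(l-k) - ((l-k : ℕ):ℝ) * x^k * (1-x)^(l-k-1))

lemma hasDerivAt_bp (l k : ℕ) (x : ℝ) :
    HasDerivAt (fun y => bp l y k) (dbp l x k) x := by
  have h1 : HasDerivAt (fun y : ℝ => y^k) ((k:ℝ)*x^(k-1)) x := hasDerivAt_pow k x
  have h2 : HasDerivAt (fun y : ℝ => (1-y)^(l-k)) (-(((l-k : ℕ):ℝ) * (1-x)^(l-k-1))) x := by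
    have hinner : HasDerivAt (fun y : ℝ => 1 - y) (-1) x := by
      simpa using (hasDerivAt_id' x).const_sub (1:ℝ)
    have := (hasDerivAt_pow (l-k) (1-x)).comp x hinner
    exact this.congr_deriv (by ring)
  have h3 := (h1.mul h2).const_mul ((l.choose k : ℝ))
  have heq : (fun y => bp l y k) = fun y => (l.choose k : ℝ) * (y^k * (1-y)^(l-k)) := by
    funext y; simp [bp]; ring
  rw [heq]
  exact h3.congr_deriv (by unfold dbp; ring)

lemma dbp_zero (m : ℕ) (x : ℝ) : dbp (m+1) x 0 = -((m:ℝ)+1) * bp m x 0 := by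
  simp [dbp, bp]
  push_cast
  ring

lemma dbp_succ (m k : ℕ) (x : ℝ) :
    dbp (m+1) x (k+1) = ((m:ℝ)+1) * (bp m x k - bp m x (k+1)) := by
  have f1 : (m+1).choose (k+1) * (k+1) = (m+1) * m.choose k := by
    simpa [Nat.succ_eq_add_one] using (Nat.add_one_mul_choose_eq m k).symm
  have f2 : (m+1).choose (k+1) * (m - k) = (m+1) * (m.choose (k+1)) := by
    have h1 := Nat.choose_succ_right_eq (m+1) (k+1)
    have h2 : m + 1 - (k+1) = m - k := by omega
    rw [h2] at h1
    have f1' : (m+1).choose (k+2) * (k+2) = (m+1) * m.choose (k+1) := by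
      simpa [Nat.succ_eq_add_one] using (Nat.add_one_mul_choose_eq m (k+1)).symm
    exact h1.symm.trans f1'
  have c1 : ((m+1).choose (k+1) : ℝ) * ((k:ℝ)+1) = ((m:ℝ)+1) * (m.choose k : ℝ) := by
    exact_mod_cast congrArg (Nat.cast : ℕ → ℝ) f1
  have c2 : ((m+1).choose (k+1) : ℝ) * ((m-k : ℕ):ℝ) = ((m:ℝ)+1) * (m.choose (k+1) : ℝ) := by
    exact_mod_cast congrArg (Nat.cast : ℕ → ℝ) f2
  unfold dbp bp
  rw [show m+1-(k+1) = m - k from by omega, show (k+1)-1 = k from by omega,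
    show m - k - 1 = m - (k+1) from by omega]
  push_cast
  linear_combination (x^k*(1-x)^(m-k)) * c1 - (x^(k+1)*(1-x)^(m-(k+1))) * c2

lemma hasDerivAt_AA (m : ℕ) (x : ℝ) :
    HasDerivAt (fun y => AA (m+1) y)
      (2*((m:ℝ)+1)*(1-2*x)*(BB m x - AA m x)) x := by
  have hsum : HasDerivAt (fun y => AA (m+1) y)
      (∑ k ∈ range (m+2), 2 * bp (m+1) x k * dbp (m+1) x k) x := by
    have : ∀ k ∈ range (m+2), HasDerivAt (fun y => (bp (m+1) y k)^2)
        (2 * bp (m+1) x k * dbp (m+1) x k) x := by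
      intro k _
      have := (hasDerivAt_bp (m+1) k x).pow 2
      exact this.congr_deriv (by push_cast; ring)
    have h := HasDerivAt.fun_sum this
    exact h
  convert hsum using 1
  rw [Finset.sum_range_succ' (fun k => 2 * bp (m+1) x k * dbp (m+1) x k) (m+1)]
  have expand : ∀ k ∈ range (m+1), 2 * bp (m+1) x (k+1) * dbp (m+1) x (k+1)
      = 2*((m:ℝ)+1) * (x * (bp m x k)^2 + (1-2*x) * (bp m x k * bp m x (k+1))
          - (1-x) * (bp m x (k+1))^2) := by
    intro k _
    rw [pascal_succ, dbp_succ]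
    ring
  rw [Finset.sum_congr rfl expand, pascal_zero, dbp_zero]
  have split : ∑ k ∈ range (m+1), 2*((m:ℝ)+1) * (x * (bp m x k)^2 + (1-2*x) * (bp m x k * bp m x (k+1))
          - (1-x) * (bp m x (k+1))^2)
      = 2*((m:ℝ)+1) * (x * AA m x + (1-2*x) * BB m x - (1-x) * (AA m x - (bp m x 0)^2)) := by
    rw [← Finset.mul_sum]
    congr 1
    rw [Finset.sum_sub_distrib, Finset.sum_add_distrib, ← Finset.mul_sum, ← Finset.mul_sum,
      ← Finset.mul_sum, sum_shift_sq]
    simp only [AA, BB]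
  rw [split]
  ring

lemma G_identity (l : ℕ) (x : ℝ) :
    (1 + 4*((l:ℝ)+1)*(x*(1-x))) * (AA (l+1) x - BB (l+1) x) - AA (l+2) x
      = (x*(1-x)) * ((2*((l:ℝ)+1)+1)*(1-4*(x*(1-x)))*(3*AA l x - 4*BB l x + CC l x)
          + (AA l x - CC l x))/2 := by
  have hAn : AA (l+2) x = (1 - 2*(x*(1-x))) * AA (l+1) x + 2*(x*(1-x)) * BB (l+1) x :=
    AA_succ (l+1) x
  have hAm : AA (l+1) x = (1 - 2*(x*(1-x))) * AA l x + 2*(x*(1-x)) * BB l x := AA_succ l x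
  have hBp : BB (l+1) x = (1 - 2*(x*(1-x))) * BB l x + (x*(1-x)) * (AA l x + CC l x) :=
    BB_succ l x
  have hBa : BB (l+1) x = ((l:ℝ)+1) * (x*(1-x)) * (AA l x - CC l x) := BB_claimA l x
  linear_combination (-1 : ℝ)*hAn + ((4*((l:ℝ)+1)+2)*(x*(1-x)))*hAm
    + (-(4*((l:ℝ)+1)+2)*(x*(1-x)))*hBp + (-1 : ℝ)*hBa

lemma AA_nonneg (l : ℕ) (x : ℝ) : 0 ≤ AA l x :=
  Finset.sum_nonneg (fun k _ => sq_nonneg _)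

lemma G_nonneg (l : ℕ) (x : ℝ) (hx0 : 0 ≤ x) (hx1 : x ≤ 1) :
    0 ≤ (1 + 4*((l:ℝ)+1)*(x*(1-x))) * (AA (l+1) x - BB (l+1) x) - AA (l+2) x := by
  rw [G_identity]
  have ht : 0 ≤ x*(1-x) := mul_nonneg hx0 (by linarith)
  have h1 : 0 ≤ (2*((l:ℝ)+1)+1)*(1-4*(x*(1-x))) := by
    rw [show 1-4*(x*(1-x)) = (1-2*x)^2 from by ring]
    positivity
  have hQ := Q_nonneg l x
  have hR := R_nonneg l x
  apply div_nonneg _ (by norm_num : (0:ℝ) ≤ 2)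
  apply mul_nonneg ht
  have := mul_nonneg h1 hR
  linarith

noncomputable def Wf (l : ℕ) (y : ℝ) : ℝ :=
  (AA (l+2) y)^(2*l+2) * (1 + 4*((l:ℝ)+1)*(y*(1-y)))^(l+2)

noncomputable def Wd (l : ℕ) (x : ℝ) : ℝ :=
  ((2*l+2 : ℕ):ℝ)*(AA (l+2) x)^(2*l+1)*(2*(((l:ℝ)+1)+1)*(1-2*x)*(BB (l+1) x - AA (l+1) x))
      *(1 + 4*((l:ℝ)+1)*(x*(1-x)))^(l+2)
  + (AA (l+2) x)^(2*l+2)*(((l+2 : ℕ):ℝ)*(1 + 4*((l:ℝ)+1)*(x*(1-x)))^(l+1)*(4*((l:ℝ)+1)*(1-2*x)))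

lemma W_hasDeriv (l : ℕ) (x : ℝ) : HasDerivAt (Wf l) (Wd l x) x := by
  have hA : HasDerivAt (fun y => AA (l+2) y)
      (2*(((l:ℝ)+1)+1)*(1-2*x)*(BB (l+1) x - AA (l+1) x)) x := by
    have := hasDerivAt_AA (l+1) x
    convert this using 2
    push_cast; ring
  have hApow := hA.pow (2*l+2)
  have h0 : HasDerivAt (fun y : ℝ => y*(1-y)) (1-2*x) x := by
    have := (hasDerivAt_id x).mul ((hasDerivAt_const x (1:ℝ)).sub (hasDerivAt_id x))
    exact this.congr_deriv (by simp only [Pi.sub_apply, id_eq]; ring)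
  have hP : HasDerivAt (fun y : ℝ => 1 + 4*((l:ℝ)+1)*(y*(1-y))) (4*((l:ℝ)+1)*(1-2*x)) x :=
    (h0.const_mul (4*((l:ℝ)+1))).const_add 1
  have hPpow := hP.pow (l+2)
  have h := hApow.mul hPpow
  rw [show 2*l+2-1 = 2*l+1 from by omega, show l+2-1 = l+1 from by omega] at h
  exact h.congr_deriv (by rfl)

lemma Wd_nonpos (l : ℕ) (x : ℝ) (hx0 : 0 ≤ x) (hx2 : x ≤ 1/2) : Wd l x ≤ 0 := by
  have hG := G_nonneg l x hx0 (by linarith)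
  have hfac : Wd l x
      = -(4*((l:ℝ)+1)*((l:ℝ)+2)*(1-2*x)*(AA (l+2) x)^(2*l+1)
          *(1 + 4*((l:ℝ)+1)*(x*(1-x)))^(l+1)
          *((1 + 4*((l:ℝ)+1)*(x*(1-x))) * (AA (l+1) x - BB (l+1) x) - AA (l+2) x)) := by
    unfold Wd
    push_cast
    ring
  rw [hfac]
  apply neg_nonpos_of_nonneg
  have ht : 0 ≤ x*(1-x) := mul_nonneg hx0 (by linarith)
  have hP : (0:ℝ) ≤ 1 + 4*((l:ℝ)+1)*(x*(1-x)) := by positivity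
  have hAp : (0:ℝ) ≤ (AA (l+2) x)^(2*l+1) := pow_nonneg (AA_nonneg _ _) _
  have h12 : (0:ℝ) ≤ 1-2*x := by linarith
  have c1 : (0:ℝ) ≤ 4*((l:ℝ)+1)*((l:ℝ)+2) := by positivity
  exact mul_nonneg (mul_nonneg (mul_nonneg (mul_nonneg c1 h12) hAp) (pow_nonneg hP _)) hG

lemma bp_zero_x (l k : ℕ) : bp l 0 k = if k = 0 then 1 else 0 := by
  rcases Nat.eq_zero_or_pos k with rfl | hk
  · simp [bp]
  · simp [bp, zero_pow (by omega : k ≠ 0), if_neg (by omega : ¬ k = 0)]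

lemma AA_zero_eq (l : ℕ) : AA l 0 = 1 := by
  unfold AA
  rw [Finset.sum_eq_single 0]
  · simp [bp_zero_x]
  · intro k _ hk
    simp [bp_zero_x, hk]
  · intro h
    exact absurd (by simp : (0:ℕ) ∈ range (l+1)) h

lemma main_half (l : ℕ) (x : ℝ) (hx0 : 0 ≤ x) (hx2 : x ≤ 1/2) :
    AA (l+2) x ≤ (1 + 4*((l:ℝ)+1)*(x*(1-x))) ^ (-((l:ℝ)+2) / (2*((l:ℝ)+1))) := by
  have hanti : AntitoneOn (Wf l) (Set.Icc 0 (1/2)) := by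
    apply antitoneOn_of_deriv_nonpos (convex_Icc _ _)
    · exact fun y _ => (W_hasDeriv l y).differentiableAt.continuousAt.continuousWithinAt
    · exact fun y _ => (W_hasDeriv l y).differentiableAt.differentiableWithinAt
    · intro y hy
      rw [interior_Icc] at hy
      rw [(W_hasDeriv l y).deriv]
      exact Wd_nonpos l y (le_of_lt hy.1) (le_of_lt hy.2)
  have hW0 : Wf l 0 = 1 := by simp [Wf, AA_zero_eq]
  have hWle : Wf l x ≤ 1 := by
    have := hanti (Set.mem_Icc.mpr ⟨le_refl 0, by norm_num⟩) (Set.mem_Icc.mpr ⟨hx0, hx2⟩) hx0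
    rw [hW0] at this; exact this
  have ht : 0 ≤ x*(1-x) := mul_nonneg hx0 (by linarith)
  set a := AA (l+2) x with ha
  set Pb := 1 + 4*((l:ℝ)+1)*(x*(1-x)) with hPb
  have hPb0 : (0:ℝ) < Pb := by rw [hPb]; positivity
  have ha0 : 0 ≤ a := AA_nonneg _ _
  have key : a^(2*l+2) * Pb^(l+2) ≤ 1 := hWle
  have hPpow : (0:ℝ) < Pb^(l+2) := pow_pos hPb0 _
  have h1 : a^(2*l+2) ≤ (Pb^(l+2))⁻¹ := by
    rw [← one_div, le_div_iff₀ hPpow]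
    exact key
  have hr : (0:ℝ) ≤ 1/(2*(l:ℝ)+2) := by positivity
  have e1 : a = (a^(2*l+2)) ^ (1/(2*(l:ℝ)+2)) := by
    rw [← Real.rpow_natCast a (2*l+2), ← Real.rpow_mul ha0]
    rw [show ((2*l+2 : ℕ):ℝ) * (1/(2*(l:ℝ)+2)) = 1 from by push_cast; field_simp]
    exact (Real.rpow_one a).symm
  calc a = (a^(2*l+2)) ^ (1/(2*(l:ℝ)+2)) := e1
    _ ≤ ((Pb^(l+2))⁻¹) ^ (1/(2*(l:ℝ)+2)) :=
        Real.rpow_le_rpow (by positivity) h1 hr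
    _ = Pb ^ (-((l:ℝ)+2) / (2*((l:ℝ)+1))) := by
        rw [← Real.rpow_natCast Pb (l+2), ← Real.rpow_neg (le_of_lt hPb0),
          ← Real.rpow_mul (le_of_lt hPb0)]
        congr 1
        push_cast
        ring

lemma reflect_sum (n : ℕ) (x : ℝ) :
    ∑ k ∈ range (n+1), (n.choose k:ℝ)^2 * x^(2*k) * (1-x)^(2*(n-k))
      = ∑ k ∈ range (n+1), (n.choose k:ℝ)^2 * (1-x)^(2*k) * x^(2*(n-k)) := by
  rw [← Finset.sum_range_reflect (fun k => (n.choose k:ℝ)^2 * (1-x)^(2*k) * x^(2*(n-k))) (n+1)]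
  apply Finset.sum_congr rfl
  intro k hk
  have hk' : k ≤ n := by
    have := Finset.mem_range.mp hk; omega
  rw [show n+1-1-k = n-k from by omega, Nat.choose_symm hk', show n - (n-k) = k from by omega]
  ring

lemma AA_eq_sum (m : ℕ) (x : ℝ) :
    ∑ k ∈ range (m+1), (m.choose k : ℝ)^2 * x^(2*k) * (1-x)^(2*(m-k)) = AA m x := by
  rw [AA]
  apply Finset.sum_congr rfl
  intro k _
  simp only [bp]
  ring

/-- For `n ≥ 2` and `x ∈ [0,1]`,
`F_n(x) ≤ (1+4(n-1)x(1-x))^{-n/(2(n-1))}`. -/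
theorem stmt_17 (n : ℕ) (hn : 2 ≤ n) (x : ℝ) (hx : x ∈ Set.Icc (0:ℝ) 1) :
    (∑ k ∈ Finset.range (n + 1), (n.choose k : ℝ) ^ 2 * x ^ (2 * k) * (1 - x) ^ (2 * (n - k))) ≤
      (1 + 4 * ((n : ℝ) - 1) * x * (1 - x)) ^ (-(n : ℝ) / (2 * ((n : ℝ) - 1))) := by
  obtain ⟨hx0, hx1⟩ := hx
  obtain ⟨l, rfl⟩ : ∃ l, n = l + 2 := ⟨n - 2, by omega⟩
  have hbase : 1 + 4*(((l+2:ℕ):ℝ)-1)*x*(1-x) = 1 + 4*((l:ℝ)+1)*(x*(1-x)) := by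
    push_cast; ring
  have hexp : -((l+2:ℕ):ℝ) / (2*(((l+2:ℕ):ℝ)-1)) = -((l:ℝ)+2) / (2*((l:ℝ)+1)) := by
    push_cast; ring
  rcases le_or_gt x (1/2) with hhalf | hhalf
  · have h := main_half l x hx0 hhalf
    rw [AA_eq_sum (l+2) x, hbase, hexp]
    exact h
  · have h := main_half l (1-x) (by linarith) (by linarith)
    have hxx : (1:ℝ) - (1-x) = x := by ring
    rw [← AA_eq_sum (l+2) (1-x)] at h
    simp only [hxx] at h
    have hbase2 : 1 + 4*(((l+2:ℕ):ℝ)-1)*x*(1-x) = 1 + 4*((l:ℝ)+1)*((1-x)*x) := by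
      push_cast; ring
    rw [reflect_sum (l+2) x, hbase2, hexp]
    exact h
end

section
/- Let $n\in\mathbb{N}$, $n\ge1$, and define $G_n(x)=\sum_{k=0}^{\infty}\binom{n+k-1}{k}^2 x^{2k}(1+x)^{-2(n+k)}$ for $x\ge0$. Then for every $x\ge0$, $G_n(x)\le\big(4(n+1)x(1+x)+1\big)^{-\frac{n}{2(n+1)}}$. -/
open scoped BigOperators

open MeasureTheory Finset

noncomputable section

namespace Stmt18Aux

/-- Fourier orthogonality on `[0, 2π]`. -/
lemma integral_exp_int (d : ℤ) :
    (∫ θ in Set.Ioc (0:ℝ) (2*Real.pi), Complex.exp (d * θ * Complex.I))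
      = if d = 0 then (2 * Real.pi : ℂ) else 0 := by
  rw [← intervalIntegral.integral_of_le (by positivity : (0:ℝ) ≤ 2*Real.pi)]
  rcases eq_or_ne d 0 with rfl | hd
  · norm_num
  · rw [if_neg hd]
    have hc : ((d : ℂ) * Complex.I) ≠ 0 := by
      simp [Complex.I_ne_zero, hd]
    have h2 : ∀ θ : ℝ, (d:ℂ) * θ * Complex.I = (d * Complex.I) * θ := fun θ => by ring
    simp_rw [h2]
    rw [integral_exp_mul_complex hc]
    have h1 : Complex.exp ((d:ℂ) * Complex.I * ((2*Real.pi : ℝ) : ℂ)) = 1 := by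
      rw [show ((d:ℂ) * Complex.I) * ((2*Real.pi : ℝ) : ℂ)
          = (d:ℂ) * (2 * (Real.pi:ℂ) * Complex.I) by push_cast; ring]
      exact_mod_cast Complex.exp_int_mul_two_pi_mul_I d
    rw [h1]
    norm_num

/-- The key Parseval-type representation for the sum of squared coefficients. -/
lemma rep (m : ℕ) (s : ℝ) (h0 : 0 ≤ s) (h1 : s < 1) :
    (2 * Real.pi) * (∑' k : ℕ, ((k + m).choose m : ℝ) ^ 2 * s ^ (2 * k))
      = ∫ θ in Set.Ioc (0:ℝ) (2 * Real.pi),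
          ((1 - 2 * s * Real.cos θ + s ^ 2) ^ (m + 1))⁻¹ := by
  have hnorm_s : ‖s‖ < 1 := by rwa [Real.norm_eq_abs, abs_of_nonneg h0]
  set z : ℝ → ℂ := fun θ => (s : ℂ) * Complex.exp (θ * Complex.I) with hz
  set w : ℝ → ℂ := fun θ => (s : ℂ) * Complex.exp (-(θ * Complex.I)) with hw
  have hz_norm : ∀ θ : ℝ, ‖z θ‖ = s := by
    intro θ
    rw [hz]
    simp only [norm_mul, Complex.norm_real, Real.norm_eq_abs, abs_of_nonneg h0]
    rw [Complex.norm_exp_ofReal_mul_I, mul_one]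
  have hw_norm : ∀ θ : ℝ, ‖w θ‖ = s := by
    intro θ
    rw [hw]
    simp only [norm_mul, Complex.norm_real, Real.norm_eq_abs, abs_of_nonneg h0]
    rw [show -((θ:ℂ) * Complex.I) = ((-θ : ℝ) : ℂ) * Complex.I by push_cast; ring]
    rw [Complex.norm_exp_ofReal_mul_I, mul_one]
  have hz_lt : ∀ θ : ℝ, ‖z θ‖ < 1 := fun θ => by rw [hz_norm θ]; exact h1
  have hw_lt : ∀ θ : ℝ, ‖w θ‖ < 1 := fun θ => by rw [hw_norm θ]; exact h1
  -- the coefficient series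
  have hu : ∀ θ : ℝ, HasSum (fun j : ℕ => ((j + m).choose m : ℂ) * z θ ^ j)
      (1 / (1 - z θ) ^ (m + 1)) :=
    fun θ => hasSum_choose_mul_geometric_of_norm_lt_one m (hz_lt θ)
  have hv : ∀ θ : ℝ, HasSum (fun j : ℕ => ((j + m).choose m : ℂ) * w θ ^ j)
      (1 / (1 - w θ) ^ (m + 1)) :=
    fun θ => hasSum_choose_mul_geometric_of_norm_lt_one m (hw_lt θ)
  have hRsum : Summable (fun j : ℕ => ((j + m).choose m : ℝ) * s ^ j) :=
    summable_choose_mul_geometric_of_norm_lt_one m hnorm_s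
  have hSz : ∀ θ : ℝ, Summable (fun j : ℕ => ‖((j + m).choose m : ℂ) * z θ ^ j‖) := by
    intro θ
    have : (fun j : ℕ => ‖((j + m).choose m : ℂ) * z θ ^ j‖)
        = fun j : ℕ => ((j + m).choose m : ℝ) * s ^ j := by
      funext j
      rw [norm_mul, norm_pow, hz_norm θ]
      simp
    rw [this]; exact hRsum
  have hSw : ∀ θ : ℝ, Summable (fun j : ℕ => ‖((j + m).choose m : ℂ) * w θ ^ j‖) := by
    intro θ
    have : (fun j : ℕ => ‖((j + m).choose m : ℂ) * w θ ^ j‖)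
        = fun j : ℕ => ((j + m).choose m : ℝ) * s ^ j := by
      funext j
      rw [norm_mul, norm_pow, hw_norm θ]
      simp
    rw [this]; exact hRsum
  -- the Cauchy product summands
  set g : ℕ → ℝ → ℂ := fun l θ => ∑ jk ∈ Finset.HasAntidiagonal.antidiagonal l,
      (((jk.1 + m).choose m : ℂ) * z θ ^ jk.1) * (((jk.2 + m).choose m : ℂ) * w θ ^ jk.2)
    with hg
  -- pointwise identity
  have hzw : ∀ θ : ℝ, (1 - z θ) * (1 - w θ)
      = ((1 - 2 * s * Real.cos θ + s ^ 2 : ℝ) : ℂ) := by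
    intro θ
    have hexp : Complex.exp ((θ:ℂ) * Complex.I) + Complex.exp (-((θ:ℂ) * Complex.I))
        = 2 * ((Real.cos θ : ℝ) : ℂ) := by
      rw [Complex.exp_mul_I, show -((θ:ℂ) * Complex.I) = (-(θ:ℂ)) * Complex.I by ring,
        Complex.exp_mul_I, Complex.cos_neg, Complex.sin_neg, Complex.ofReal_cos]
      ring
    have hmulexp : Complex.exp ((θ:ℂ) * Complex.I) * Complex.exp (-((θ:ℂ) * Complex.I)) = 1 := by
      rw [← Complex.exp_add, add_neg_cancel, Complex.exp_zero]
    calc (1 - z θ) * (1 - w θ)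
        = 1 - (s:ℂ) * (Complex.exp ((θ:ℂ) * Complex.I) + Complex.exp (-((θ:ℂ) * Complex.I)))
          + (s:ℂ)^2 * (Complex.exp ((θ:ℂ) * Complex.I) * Complex.exp (-((θ:ℂ) * Complex.I))) := by
          rw [hz, hw]; ring
      _ = ((1 - 2 * s * Real.cos θ + s ^ 2 : ℝ) : ℂ) := by
          rw [hexp, hmulexp]; push_cast; ring
  have hprod : ∀ θ : ℝ, (((1 - 2 * s * Real.cos θ + s ^ 2 : ℝ) : ℂ) ^ (m+1))⁻¹
      = ∑' l : ℕ, g l θ := by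
    intro θ
    have h3 := tsum_mul_tsum_eq_tsum_sum_antidiagonal_of_summable_norm (hSz θ) (hSw θ)
    rw [(hu θ).tsum_eq, (hv θ).tsum_eq] at h3
    rw [hg, ← h3, ← hzw θ, mul_pow, mul_inv]
    rw [div_mul_div_comm, one_mul, one_div, mul_inv]
  -- measurability
  have hcont : ∀ l, Continuous (g l) := by
    intro l
    apply continuous_finset_sum
    intro jk _
    apply Continuous.mul
    · apply Continuous.mul continuous_const
      apply Continuous.pow
      exact Continuous.mul continuous_const
        (Complex.continuous_exp.comp ((Complex.continuous_ofReal).mul continuous_const))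
    · apply Continuous.mul continuous_const
      apply Continuous.pow
      exact Continuous.mul continuous_const
        (Complex.continuous_exp.comp
          (((Complex.continuous_ofReal).mul continuous_const).neg))
  -- the norm bound
  set M : ℕ → ℝ := fun l => ∑ jk ∈ Finset.HasAntidiagonal.antidiagonal l,
      (((jk.1 + m).choose m : ℝ) * s ^ jk.1) * (((jk.2 + m).choose m : ℝ) * s ^ jk.2) with hMdef
  have hM_nonneg : ∀ l, 0 ≤ M l := by
    intro l
    apply Finset.sum_nonneg
    intro jk _
    positivity
  have hfR_norm : Summable (fun j : ℕ => ‖((j + m).choose m : ℝ) * s ^ j‖) := by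
    have : (fun j : ℕ => ‖((j + m).choose m : ℝ) * s ^ j‖)
        = fun j : ℕ => ((j + m).choose m : ℝ) * s ^ j := by
      funext j
      rw [Real.norm_eq_abs, abs_of_nonneg (by positivity)]
    rw [this]; exact hRsum
  have hM : Summable M := by
    have := summable_norm_sum_mul_antidiagonal_of_summable_norm hfR_norm hfR_norm
    exact this.of_norm
  have hg_le : ∀ l (θ : ℝ), ‖g l θ‖ ≤ M l := by
    intro l θ
    refine (norm_sum_le _ _).trans ?_
    apply Finset.sum_le_sum
    intro jk _
    rw [norm_mul, norm_mul, norm_mul, norm_pow, norm_pow, hz_norm, hw_norm]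
    simp only [Complex.norm_natCast]
    exact le_of_eq rfl
  -- the swap of integral and sum
  have hmeas : ∀ l, AEStronglyMeasurable (g l)
      (volume.restrict (Set.Ioc (0:ℝ) (2*Real.pi))) :=
    fun l => (hcont l).aestronglyMeasurable
  have hlint : (∑' l : ℕ, ∫⁻ θ in Set.Ioc (0:ℝ) (2*Real.pi), ‖g l θ‖₊) ≠ ⊤ := by
    have hle : ∀ l, (∫⁻ θ in Set.Ioc (0:ℝ) (2*Real.pi), ‖g l θ‖₊)
        ≤ ENNReal.ofReal (M l * (2 * Real.pi)) := by
      intro l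
      calc (∫⁻ θ in Set.Ioc (0:ℝ) (2*Real.pi), (‖g l θ‖₊ : ENNReal))
          ≤ ∫⁻ _ in Set.Ioc (0:ℝ) (2*Real.pi), ENNReal.ofReal (M l) := by
            apply lintegral_mono
            intro θ
            have h' : ENNReal.ofReal ‖g l θ‖ ≤ ENNReal.ofReal (M l) :=
              ENNReal.ofReal_le_ofReal (hg_le l θ)
            rwa [ofReal_norm, enorm_eq_nnnorm] at h'
        _ = ENNReal.ofReal (M l) * volume (Set.Ioc (0:ℝ) (2*Real.pi)) := by
            rw [lintegral_const, Measure.restrict_apply_univ]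
        _ = ENNReal.ofReal (M l * (2*Real.pi)) := by
            rw [Real.volume_Ioc, sub_zero, ← ENNReal.ofReal_mul (hM_nonneg l)]
    refine ne_of_lt (lt_of_le_of_lt (ENNReal.tsum_le_tsum hle) ?_)
    have hsum2 : Summable (fun l => M l * (2 * Real.pi)) := hM.mul_right _
    have := ENNReal.ofReal_tsum_of_nonneg
      (fun l => mul_nonneg (hM_nonneg l) (by positivity)) hsum2
    rw [← this]
    exact ENNReal.ofReal_lt_top
  have hswap := MeasureTheory.integral_tsum
      (μ := volume.restrict (Set.Ioc (0:ℝ) (2*Real.pi))) hmeas hlint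
  -- compute each integral
  have hint_g : ∀ l, (∫ θ in Set.Ioc (0:ℝ) (2*Real.pi), g l θ)
      = ∑ jk ∈ Finset.HasAntidiagonal.antidiagonal l,
          ((((jk.1 + m).choose m : ℂ) * ((jk.2 + m).choose m : ℂ) * (s:ℂ) ^ l)
            * (if jk.1 = jk.2 then (2*Real.pi : ℂ) else 0)) := by
    intro l
    have hterm : ∀ jk ∈ Finset.HasAntidiagonal.antidiagonal l, ∀ θ : ℝ,
        (((jk.1 + m).choose m : ℂ) * z θ ^ jk.1) * (((jk.2 + m).choose m : ℂ) * w θ ^ jk.2)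
          = (((jk.1 + m).choose m : ℂ) * ((jk.2 + m).choose m : ℂ) * (s:ℂ) ^ l)
            * Complex.exp ((((jk.1 : ℤ) - (jk.2 : ℤ) : ℤ) : ℂ) * θ * Complex.I) := by
      intro jk hjk θ
      have hl : jk.1 + jk.2 = l := Finset.HasAntidiagonal.mem_antidiagonal.mp hjk
      have e1 : z θ ^ jk.1 = (s:ℂ) ^ jk.1 * Complex.exp ((jk.1 : ℂ) * ((θ:ℂ) * Complex.I)) := by
        rw [hz, mul_pow, Complex.exp_nat_mul]
      have e2 : w θ ^ jk.2 = (s:ℂ) ^ jk.2 * Complex.exp ((jk.2 : ℂ) * (-((θ:ℂ) * Complex.I))) := by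
        rw [hw, mul_pow, Complex.exp_nat_mul]
      rw [e1, e2]
      rw [show (((jk.1 : ℂ)) * ((θ:ℂ) * Complex.I)) = ((jk.1 : ℂ) * θ * Complex.I) by ring]
      rw [show (((jk.2 : ℂ)) * (-((θ:ℂ) * Complex.I))) = (-((jk.2 : ℂ) * θ * Complex.I)) by ring]
      rw [show ((((jk.1 : ℤ) - (jk.2 : ℤ) : ℤ) : ℂ)) = ((jk.1 : ℂ) - (jk.2 : ℂ)) by push_cast; ring]
      rw [← hl, pow_add]
      rw [show ((jk.1 : ℂ) - (jk.2 : ℂ)) * θ * Complex.I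
          = (jk.1 : ℂ) * θ * Complex.I + (-((jk.2 : ℂ) * θ * Complex.I)) by ring]
      rw [Complex.exp_add]
      ring
    have hgrw : ∀ θ : ℝ, g l θ = ∑ jk ∈ Finset.HasAntidiagonal.antidiagonal l,
        ((((jk.1 + m).choose m : ℂ) * ((jk.2 + m).choose m : ℂ) * (s:ℂ) ^ l)
          * Complex.exp ((((jk.1 : ℤ) - (jk.2 : ℤ) : ℤ) : ℂ) * θ * Complex.I)) := by
      intro θ
      rw [hg]
      exact Finset.sum_congr rfl (fun jk hjk => hterm jk hjk θ)
    calc (∫ θ in Set.Ioc (0:ℝ) (2*Real.pi), g l θ)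
        = ∫ θ in Set.Ioc (0:ℝ) (2*Real.pi), ∑ jk ∈ Finset.HasAntidiagonal.antidiagonal l,
            ((((jk.1 + m).choose m : ℂ) * ((jk.2 + m).choose m : ℂ) * (s:ℂ) ^ l)
              * Complex.exp ((((jk.1 : ℤ) - (jk.2 : ℤ) : ℤ) : ℂ) * θ * Complex.I)) := by
          exact integral_congr_ae (Filter.Eventually.of_forall (fun θ => hgrw θ))
      _ = ∑ jk ∈ Finset.HasAntidiagonal.antidiagonal l,
            ∫ θ in Set.Ioc (0:ℝ) (2*Real.pi),
              ((((jk.1 + m).choose m : ℂ) * ((jk.2 + m).choose m : ℂ) * (s:ℂ) ^ l)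
                * Complex.exp ((((jk.1 : ℤ) - (jk.2 : ℤ) : ℤ) : ℂ) * θ * Complex.I)) := by
          apply integral_finset_sum
          intro jk _
          apply Continuous.integrableOn_Ioc
          exact continuous_const.mul
            (Complex.continuous_exp.comp
              ((continuous_const.mul Complex.continuous_ofReal).mul continuous_const))
      _ = ∑ jk ∈ Finset.HasAntidiagonal.antidiagonal l,
            ((((jk.1 + m).choose m : ℂ) * ((jk.2 + m).choose m : ℂ) * (s:ℂ) ^ l)
              * (if jk.1 = jk.2 then (2*Real.pi : ℂ) else 0)) := by
          apply Finset.sum_congr rfl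
          intro jk _
          rw [MeasureTheory.integral_const_mul, integral_exp_int]
          by_cases h : jk.1 = jk.2
          · rw [if_pos h, if_pos (by omega : ((jk.1:ℤ) - (jk.2:ℤ)) = 0)]
          · rw [if_neg (by omega : ¬(((jk.1:ℤ) - (jk.2:ℤ)) = 0)), if_neg h]
  -- evaluate the finite sums
  have hval : ∀ l, (∑ jk ∈ Finset.HasAntidiagonal.antidiagonal l,
      ((((jk.1 + m).choose m : ℂ) * ((jk.2 + m).choose m : ℂ) * (s:ℂ) ^ l)
        * (if jk.1 = jk.2 then (2*Real.pi : ℂ) else 0)))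
      = if l % 2 = 0 then
          (2*Real.pi : ℂ) * (((l/2 + m).choose m : ℂ))^2 * (s:ℂ) ^ l else 0 := by
    intro l
    rcases Nat.even_or_odd l with ⟨k, hk⟩ | ⟨k, hk⟩
    · rw [if_pos (by omega)]
      have hmem : (k, k) ∈ Finset.HasAntidiagonal.antidiagonal l := by
        rw [Finset.HasAntidiagonal.mem_antidiagonal]; omega
      rw [Finset.sum_eq_single_of_mem (k, k) hmem]
      · rw [if_pos rfl]
        have : l / 2 = k := by omega
        rw [this]
        ring
      · intro jk hjk hne
        have hl : jk.1 + jk.2 = l := Finset.HasAntidiagonal.mem_antidiagonal.mp hjk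
        have : ¬ (jk.1 = jk.2) := by
          intro h
          apply hne
          have : jk.1 = k := by omega
          have h2 : jk.2 = k := by omega
          rw [Prod.ext_iff]
          exact ⟨this, h2⟩
        rw [if_neg this, mul_zero]
    · rw [if_neg (by omega)]
      apply Finset.sum_eq_zero
      intro jk hjk
      have hl : jk.1 + jk.2 = l := Finset.HasAntidiagonal.mem_antidiagonal.mp hjk
      have : ¬ (jk.1 = jk.2) := by intro h; omega
      rw [if_neg this, mul_zero]
  -- reindex the tsum over even indices
  have hreindex : (∑' l : ℕ, (if l % 2 = 0 then
        (2*Real.pi : ℂ) * (((l/2 + m).choose m : ℂ))^2 * (s:ℂ) ^ l else 0))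
      = ∑' k : ℕ, (2*Real.pi : ℂ) * (((k + m).choose m : ℂ))^2 * (s:ℂ) ^ (2*k) := by
    have hinj : Function.Injective (fun k : ℕ => 2 * k) := by
      intro a b h
      dsimp at h
      omega
    rw [← Function.Injective.tsum_eq (g := fun k : ℕ => 2 * k)
      (f := fun l => if l % 2 = 0 then
        (2*Real.pi : ℂ) * (((l/2 + m).choose m : ℂ))^2 * (s:ℂ) ^ l else 0)
      hinj ?_]
    · apply tsum_congr
      intro k
      rw [if_pos (by omega : (2*k) % 2 = 0)]
      rw [show (2*k)/2 = k by omega]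
    · intro l hl
      rw [Function.mem_support] at hl
      rw [Set.mem_range]
      by_cases h2 : l % 2 = 0
      · exact ⟨l/2, by show 2 * (l/2) = l; omega⟩
      · exact absurd (if_neg h2) hl
  -- real summability
  have hreal_sum : Summable (fun k : ℕ => ((k + m).choose m : ℝ) ^ 2 * s ^ (2*k)) := by
    have hMc : Summable (fun k : ℕ => M (2*k)) :=
      hM.comp_injective (fun a b h => by omega)
    refine Summable.of_nonneg_of_le (fun k => by positivity) (fun k => ?_) hMc
    have hmem : (k, k) ∈ Finset.HasAntidiagonal.antidiagonal (2*k) := by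
      rw [Finset.HasAntidiagonal.mem_antidiagonal]; omega
    calc ((k + m).choose m : ℝ) ^ 2 * s ^ (2*k)
        = (((k + m).choose m : ℝ) * s ^ k) * (((k + m).choose m : ℝ) * s ^ k) := by
          rw [two_mul, pow_add]; ring
      _ ≤ M (2*k) := by
          rw [hMdef]
          apply Finset.single_le_sum (f := fun jk : ℕ × ℕ =>
            (((jk.1 + m).choose m : ℝ) * s ^ jk.1) * (((jk.2 + m).choose m : ℝ) * s ^ jk.2))
            (fun jk _ => by positivity) hmem
  -- put everything together, in ℂ
  have hC : ((2 * Real.pi : ℝ) * (∑' k : ℕ, ((k + m).choose m : ℝ) ^ 2 * s ^ (2 * k)) : ℂ)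
      = ((∫ θ in Set.Ioc (0:ℝ) (2 * Real.pi),
          ((1 - 2 * s * Real.cos θ + s ^ 2) ^ (m + 1))⁻¹ : ℝ) : ℂ) := by
    have hint_eq : ((∫ θ in Set.Ioc (0:ℝ) (2 * Real.pi),
        ((1 - 2 * s * Real.cos θ + s ^ 2) ^ (m + 1))⁻¹ : ℝ) : ℂ)
        = ∫ θ in Set.Ioc (0:ℝ) (2 * Real.pi),
            (((1 - 2 * s * Real.cos θ + s ^ 2 : ℝ) : ℂ) ^ (m+1))⁻¹ := by
      have hposR : ∀ θ : ℝ, 0 < 1 - 2 * s * Real.cos θ + s ^ 2 := by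
        intro θ
        have hcle : Real.cos θ ≤ 1 := Real.cos_le_one θ
        nlinarith [Real.neg_one_le_cos θ]
      have hcontR : Continuous (fun θ : ℝ => ((1 - 2 * s * Real.cos θ + s ^ 2) ^ (m + 1))⁻¹) := by
        apply Continuous.inv₀
        · exact ((continuous_const.sub (continuous_const.mul Real.continuous_cos)).add
            continuous_const).pow (m+1)
        · intro θ
          exact ne_of_gt (pow_pos (hposR θ) _)
      have hIntR : IntegrableOn (fun θ : ℝ => ((1 - 2 * s * Real.cos θ + s ^ 2) ^ (m + 1))⁻¹)
          (Set.Ioc (0:ℝ) (2*Real.pi)) := hcontR.integrableOn_Ioc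
      have hoR := ContinuousLinearMap.integral_comp_comm Complex.ofRealCLM hIntR
      rw [← Complex.ofRealCLM_apply, ← hoR]
      apply integral_congr_ae
      apply Filter.Eventually.of_forall
      intro θ
      simp only [Complex.ofRealCLM_apply]
      push_cast
      ring
    rw [hint_eq]
    have h5 : (∫ θ in Set.Ioc (0:ℝ) (2 * Real.pi),
        (((1 - 2 * s * Real.cos θ + s ^ 2 : ℝ) : ℂ) ^ (m+1))⁻¹)
        = ∫ θ in Set.Ioc (0:ℝ) (2 * Real.pi), ∑' l : ℕ, g l θ := by
      apply integral_congr_ae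
      exact Filter.Eventually.of_forall (fun θ => hprod θ)
    rw [h5, hswap]
    have h6 : (∑' l : ℕ, ∫ θ in Set.Ioc (0:ℝ) (2*Real.pi), g l θ)
        = ∑' k : ℕ, (2*Real.pi : ℂ) * (((k + m).choose m : ℂ))^2 * (s:ℂ) ^ (2*k) := by
      rw [← hreindex]
      apply tsum_congr
      intro l
      rw [hint_g l, hval l]
    rw [h6]
    rw [show ((2 * Real.pi : ℝ) * (∑' k : ℕ, ((k + m).choose m : ℝ) ^ 2 * s ^ (2 * k)) : ℂ)
        = (2*Real.pi:ℂ) * ((∑' k : ℕ, ((k + m).choose m : ℝ) ^ 2 * s ^ (2 * k) : ℝ) : ℂ) by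
          push_cast; ring]
    rw [Complex.ofReal_tsum, ← tsum_mul_left]
    apply tsum_congr
    intro k
    push_cast
    ring
  exact_mod_cast hC

/-- Rescaled representation with the Baskakov weights. -/
lemma rep' (m : ℕ) (y : ℝ) (hy : 0 ≤ y) :
    (2 * Real.pi) * (∑' k : ℕ,
        ((k + m).choose m : ℝ) ^ 2 * y ^ (2*k) * ((1+y) ^ (2*(m+1)+2*k))⁻¹)
      = ∫ θ in Set.Ioc (0:ℝ) (2*Real.pi),
          ((1 + 2*(y*(1+y))*(1 - Real.cos θ)) ^ (m + 1))⁻¹ := by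
  have hy1 : (0:ℝ) < 1 + y := by linarith
  have hy1' : (1:ℝ) + y ≠ 0 := hy1.ne'
  set s : ℝ := y / (1+y) with hs
  have h0 : 0 ≤ s := div_nonneg hy hy1.le
  have h1 : s < 1 := by
    rw [hs, div_lt_one hy1]; linarith
  have hrep := rep m s h0 h1
  have hterm : ∀ k : ℕ, ((k + m).choose m : ℝ) ^ 2 * y ^ (2*k) * ((1+y) ^ (2*(m+1)+2*k))⁻¹
      = ((1+y) ^ (2*(m+1)))⁻¹ * (((k + m).choose m : ℝ) ^ 2 * s ^ (2*k)) := by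
    intro k
    rw [hs, div_pow, pow_add ((1:ℝ)+y) (2*(m+1)) (2*k), mul_inv]
    have hne : ((1:ℝ)+y) ^ (2*k) ≠ 0 := pow_ne_zero _ hy1'
    field_simp
  have hintegrand : ∀ θ : ℝ, ((1 + 2*(y*(1+y))*(1 - Real.cos θ)) ^ (m + 1))⁻¹
      = ((1+y) ^ (2*(m+1)))⁻¹ * ((1 - 2*s*Real.cos θ + s^2) ^ (m+1))⁻¹ := by
    intro θ
    have hbase : (1 + 2*(y*(1+y))*(1 - Real.cos θ))
        = (1+y)^2 * (1 - 2*s*Real.cos θ + s^2) := by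
      rw [hs]
      field_simp
      ring
    rw [hbase, mul_pow, mul_inv, ← pow_mul]
  calc (2 * Real.pi) * (∑' k : ℕ,
        ((k + m).choose m : ℝ) ^ 2 * y ^ (2*k) * ((1+y) ^ (2*(m+1)+2*k))⁻¹)
      = ((1+y) ^ (2*(m+1)))⁻¹
          * ((2 * Real.pi) * (∑' k : ℕ, ((k + m).choose m : ℝ) ^ 2 * s ^ (2*k))) := by
        rw [show (∑' k : ℕ,
            ((k + m).choose m : ℝ) ^ 2 * y ^ (2*k) * ((1+y) ^ (2*(m+1)+2*k))⁻¹)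
            = ∑' k : ℕ, ((1+y) ^ (2*(m+1)))⁻¹ * (((k + m).choose m : ℝ) ^ 2 * s ^ (2*k)) from
          tsum_congr hterm]
        rw [tsum_mul_left]
        ring
    _ = ((1+y) ^ (2*(m+1)))⁻¹ * ∫ θ in Set.Ioc (0:ℝ) (2*Real.pi),
          ((1 - 2*s*Real.cos θ + s^2) ^ (m+1))⁻¹ := by rw [hrep]
    _ = ∫ θ in Set.Ioc (0:ℝ) (2*Real.pi),
          ((1 + 2*(y*(1+y))*(1 - Real.cos θ)) ^ (m + 1))⁻¹ := by
        rw [← MeasureTheory.integral_const_mul]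
        apply integral_congr_ae
        apply Filter.Eventually.of_forall
        intro θ
        exact (hintegrand θ).symm

/-- The exact value of the basic integral. -/
lemma exact_integral (A : ℝ) (hA : 0 ≤ A) :
    (∫ θ in Set.Ioc (0:ℝ) (2*Real.pi), (1 + 2*A*(1 - Real.cos θ))⁻¹)
      = (2*Real.pi) * (1 + 4*A) ^ (-(1/2) : ℝ) := by
  have hu0 : (0:ℝ) < 1 + 4*A := by linarith
  set r : ℝ := Real.sqrt (1 + 4*A) with hr
  have hr2 : r^2 = 1 + 4*A := Real.sq_sqrt hu0.le
  have hr0 : 0 ≤ r := Real.sqrt_nonneg _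
  have hr1 : 1 ≤ r := by nlinarith
  set y : ℝ := (r - 1)/2 with hy
  have hy0 : 0 ≤ y := by rw [hy]; linarith
  have hyA : y * (1 + y) = A := by
    have h' : y * (1 + y) = (r^2 - 1)/4 := by rw [hy]; ring
    rw [h', hr2]; ring
  have h := rep' 0 y hy0
  have hy1 : (0:ℝ) < 1 + y := by linarith
  have hne : (1:ℝ) + y ≠ 0 := hy1.ne'
  set q : ℝ := (y / (1+y))^2 with hq
  have hq0 : 0 ≤ q := sq_nonneg _
  have hq1 : q < 1 := by
    rw [hq]
    have hlt : y / (1+y) < 1 := by rw [div_lt_one hy1]; linarith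
    nlinarith [div_nonneg hy0 hy1.le]
  clear_value r y q
  have hterm : ∀ k : ℕ, ((k + 0).choose 0 : ℝ) ^ 2 * y ^ (2*k) * ((1+y) ^ (2*(0+1)+2*k))⁻¹
      = ((1+y)^2)⁻¹ * q ^ k := by
    intro k
    have hsplit : ((1:ℝ)+y) ^ (2*(0+1)+2*k) = (1+y)^2 * (1+y)^(2*k) := by
      rw [← pow_add]
    rw [hq, ← pow_mul, div_pow, hsplit, mul_inv]
    simp only [Nat.choose_zero_right, Nat.cast_one, one_pow, one_mul]
    ring
  rw [show (∑' k : ℕ, ((k + 0).choose 0 : ℝ) ^ 2 * y ^ (2*k) * ((1+y) ^ (2*(0+1)+2*k))⁻¹)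
      = ∑' k : ℕ, ((1+y)^2)⁻¹ * q ^ k from tsum_congr hterm, tsum_mul_left,
    tsum_geometric_of_lt_one hq0 hq1] at h
  have hval : ((1+y)^2)⁻¹ * (1 - q)⁻¹ = (1 + 4*A) ^ (-(1/2) : ℝ) := by
    have h2y : 1 + 2*y = r := by rw [hy]; ring
    have hq' : (1 - q) = (1 + 2*y)/(1+y)^2 := by
      rw [hq]; field_simp; ring
    rw [hq', h2y]
    rw [Real.rpow_neg hu0.le, ← Real.sqrt_eq_rpow, ← hr]
    have hrne : r ≠ 0 := by positivity
    field_simp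
  calc (∫ θ in Set.Ioc (0:ℝ) (2*Real.pi), (1 + 2*A*(1 - Real.cos θ))⁻¹)
      = ∫ θ in Set.Ioc (0:ℝ) (2*Real.pi),
          ((1 + 2*(y*(1+y))*(1 - Real.cos θ)) ^ (0+1))⁻¹ := by
        apply integral_congr_ae
        apply Filter.Eventually.of_forall
        intro θ
        simp only [hyA, pow_one, zero_add]
    _ = (2 * Real.pi) * (((1+y)^2)⁻¹ * (1 - q)⁻¹) := h.symm
    _ = (2*Real.pi) * (1 + 4*A) ^ (-(1/2) : ℝ) := by rw [hval]

/-- Bernoulli-type pointwise bound. -/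
lemma pointwise_bound (m : ℕ) (u : ℝ) (hu : 0 ≤ u) :
    ((1 + u) ^ (m+1))⁻¹
      ≤ ((1 + (((m:ℝ)+1)+1)*u)⁻¹) ^ (((m:ℝ)+1)/(((m:ℝ)+1)+1)) := by
  have h1u : (0:ℝ) < 1 + u := by linarith
  have h2 : (0:ℝ) < 1 + (((m:ℝ)+1)+1)*u := by positivity
  set q : ℝ := ((m:ℝ)+1)/(((m:ℝ)+1)+1) with hqdef
  have hq0 : 0 ≤ q := by positivity
  have hbern : 1 + (((m:ℝ)+1)+1) * u ≤ (1+u)^(m+2) := by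
    have h := one_add_mul_le_pow (by linarith : (-2:ℝ) ≤ u) (m+2)
    calc 1 + (((m:ℝ)+1)+1)*u = 1 + ((m+2 : ℕ):ℝ) * u := by push_cast; ring
      _ ≤ (1+u)^(m+2) := h
  have h3 : (1 + (((m:ℝ)+1)+1)*u) ^ q ≤ ((1+u)^(m+2) : ℝ) ^ q :=
    Real.rpow_le_rpow h2.le hbern hq0
  have h4 : ((1+u)^(m+2) : ℝ) ^ q = (1+u)^(m+1) := by
    rw [← Real.rpow_natCast (1+u) (m+2), ← Real.rpow_mul h1u.le,
      ← Real.rpow_natCast (1+u) (m+1)]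
    congr 1
    rw [hqdef]
    have hne : ((m:ℝ)+1)+1 ≠ 0 := by positivity
    push_cast
    field_simp
    ring
  rw [Real.inv_rpow h2.le]
  have hle : (1 + (((m:ℝ)+1)+1)*u) ^ q ≤ (1+u)^(m+1) := h4 ▸ h3
  exact inv_anti₀ (Real.rpow_pos_of_pos h2 q) hle

end Stmt18Aux

/-- For `n ≥ 1` and `x ≥ 0`, the sum of squared Baskakov fundamental functions
satisfies `G_n(x) ≤ (4(n+1)x(1+x)+1)^{-n/(2(n+1))}`. -/
theorem stmt_18 (n : ℕ) (hn : 1 ≤ n) (x : ℝ) (hx : 0 ≤ x) :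
    (∑' k : ℕ, ((n + k - 1).choose k : ℝ) ^ 2 * x ^ (2 * k) * (1 + x) ^ (-(2 * ((n : ℤ) + k)))) ≤
      (4 * ((n : ℝ) + 1) * x * (1 + x) + 1) ^ (-(n : ℝ) / (2 * ((n : ℝ) + 1))) := by
  obtain ⟨m, rfl⟩ : ∃ m : ℕ, n = m + 1 := ⟨n - 1, by omega⟩
  have h2pi : (0:ℝ) < 2 * Real.pi := by positivity
  have hx1 : (0:ℝ) < 1 + x := by linarith
  have hb0 : (0:ℝ) ≤ x * (1 + x) := mul_nonneg hx hx1.le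
  set N : ℝ := (m:ℝ) + 1 with hN
  have hN0 : (0:ℝ) < N := by rw [hN]; positivity
  have hN1 : (0:ℝ) < N + 1 := by linarith
  set q : ℝ := N / (N + 1) with hq
  have hq0 : (0:ℝ) ≤ q := by rw [hq]; positivity
  set A : ℝ := (N + 1) * (x * (1 + x)) with hA
  have hA0 : (0:ℝ) ≤ A := by rw [hA]; positivity
  set f : ℝ → ℝ := fun θ => (1 + 2 * A * (1 - Real.cos θ))⁻¹ with hf
  have hone_sub_cos : ∀ θ : ℝ, (0:ℝ) ≤ 1 - Real.cos θ := fun θ => by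
    have := Real.cos_le_one θ; linarith
  have hbase1 : ∀ θ : ℝ, (0:ℝ) < 1 + 2 * (x * (1 + x)) * (1 - Real.cos θ) := by
    intro θ
    have := mul_nonneg (mul_nonneg (by norm_num : (0:ℝ) ≤ 2) hb0) (hone_sub_cos θ)
    linarith
  have hbasef : ∀ θ : ℝ, (1:ℝ) ≤ 1 + 2 * A * (1 - Real.cos θ) := by
    intro θ
    have := mul_nonneg (mul_nonneg (by norm_num : (0:ℝ) ≤ 2) hA0) (hone_sub_cos θ)
    linarith
  have hfpos : ∀ θ : ℝ, 0 < f θ := fun θ => inv_pos.mpr (by linarith [hbasef θ])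
  have hfle1 : ∀ θ : ℝ, f θ ≤ 1 := fun θ => inv_le_one_of_one_le₀ (hbasef θ)
  set μ := volume.restrict (Set.Ioc (0:ℝ) (2 * Real.pi)) with hμ
  haveI : IsFiniteMeasure μ := by
    constructor
    rw [hμ, Measure.restrict_apply_univ, Real.volume_Ioc]
    exact ENNReal.ofReal_lt_top
  have hcont1 : Continuous
      (fun θ : ℝ => ((1 + 2 * (x * (1 + x)) * (1 - Real.cos θ)) ^ (m + 1))⁻¹) := by
    apply Continuous.inv₀
    · exact (continuous_const.add (continuous_const.mul
        (continuous_const.sub Real.continuous_cos))).pow (m + 1)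
    · exact fun θ => ne_of_gt (pow_pos (hbase1 θ) _)
  have hcontf : Continuous f := by
    rw [hf]
    apply Continuous.inv₀
    · exact continuous_const.add (continuous_const.mul
        (continuous_const.sub Real.continuous_cos))
    · exact fun θ => ne_of_gt (by linarith [hbasef θ])
  have hcontfq : Continuous (fun θ : ℝ => f θ ^ q) :=
    hcontf.rpow_const (fun θ => Or.inl (ne_of_gt (hfpos θ)))
  have hpt : ∀ θ : ℝ, ((1 + 2 * (x * (1 + x)) * (1 - Real.cos θ)) ^ (m + 1))⁻¹ ≤ f θ ^ q := by
    intro θ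
    have hu0 : (0:ℝ) ≤ 2 * (x * (1 + x)) * (1 - Real.cos θ) :=
      mul_nonneg (mul_nonneg (by norm_num) hb0) (hone_sub_cos θ)
    have h := Stmt18Aux.pointwise_bound m _ hu0
    have e1 : 1 + (((m:ℝ)+1)+1) * (2 * (x * (1 + x)) * (1 - Real.cos θ))
        = 1 + 2 * A * (1 - Real.cos θ) := by rw [hA, hN]; ring
    have e2 : ((m:ℝ)+1)/(((m:ℝ)+1)+1) = q := by rw [hq, hN]
    rw [e1, e2] at h
    exact h
  have hrep := Stmt18Aux.rep' m x hx
  have hLHS : (∑' k : ℕ, (((m + 1) + k - 1).choose k : ℝ) ^ 2 * x ^ (2 * k)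
        * (1 + x) ^ (-(2 * (((m + 1 : ℕ) : ℤ) + (k : ℤ)))))
      = ∑' k : ℕ, ((k + m).choose m : ℝ) ^ 2 * x ^ (2 * k)
          * ((1 + x) ^ (2 * (m + 1) + 2 * k))⁻¹ := by
    apply tsum_congr
    intro k
    have hco : ((m + 1) + k - 1).choose k = (k + m).choose m := by
      rw [show (m + 1) + k - 1 = k + m by omega]
      exact Nat.choose_symm_add
    have hz : (1 + x : ℝ) ^ (-(2 * (((m + 1 : ℕ) : ℤ) + (k : ℤ))))
        = ((1 + x) ^ (2 * (m + 1) + 2 * k))⁻¹ := by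
      rw [show (-(2 * (((m + 1 : ℕ) : ℤ) + (k : ℤ)))) = -((2 * (m + 1) + 2 * k : ℕ) : ℤ) by
        push_cast; ring]
      rw [zpow_neg, zpow_natCast]
    rw [hco, hz]
  refine le_trans (le_of_eq hLHS) ?_
  have hTeq : (∑' k : ℕ, ((k + m).choose m : ℝ) ^ 2 * x ^ (2 * k)
        * ((1 + x) ^ (2 * (m + 1) + 2 * k))⁻¹)
      = (2 * Real.pi)⁻¹
        * ∫ θ, ((1 + 2 * (x * (1 + x)) * (1 - Real.cos θ)) ^ (m + 1))⁻¹ ∂μ := by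
    rw [hμ, ← hrep]
    field_simp
  rw [hTeq]
  -- Hölder inequality
  have hpq : Real.HolderConjugate ((N+1)/N) (N+1) := by
    rw [Real.holderConjugate_iff]; constructor
    · rw [lt_div_iff₀ hN0]; linarith
    · rw [inv_div]
      field_simp
  have hFmem : MemLp (fun θ : ℝ => f θ ^ q) (ENNReal.ofReal ((N+1)/N)) μ := by
    apply MemLp.of_bound hcontfq.aestronglyMeasurable 1
    apply ae_of_all
    intro θ
    rw [Real.norm_eq_abs, abs_of_nonneg (Real.rpow_nonneg (hfpos θ).le q)]
    exact Real.rpow_le_one (hfpos θ).le (hfle1 θ) hq0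
  have hGmem : MemLp (fun _ : ℝ => (1:ℝ)) (ENNReal.ofReal (N+1)) μ := memLp_const 1
  have hHold := integral_mul_le_Lp_mul_Lq_of_nonneg hpq
    (ae_of_all _ (fun θ => Real.rpow_nonneg (hfpos θ).le q))
    (ae_of_all _ (fun _ : ℝ => zero_le_one)) hFmem hGmem
  have hsimp1 : (∫ θ, f θ ^ q * 1 ∂μ) = ∫ θ, f θ ^ q ∂μ := by simp
  have hsimp2 : (∫ θ, (f θ ^ q) ^ ((N+1)/N) ∂μ) = ∫ θ, f θ ∂μ := by
    apply integral_congr_ae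
    apply ae_of_all
    intro θ
    dsimp only
    rw [← Real.rpow_mul (hfpos θ).le,
      show q * ((N+1)/N) = 1 by rw [hq]; field_simp, Real.rpow_one]
  have hsimp3 : (∫ _ : ℝ, ((1:ℝ)) ^ ((N+1) : ℝ) ∂μ) = 2 * Real.pi := by
    simp only [Real.one_rpow]
    rw [MeasureTheory.integral_const, hμ, measureReal_restrict_apply_univ, Real.volume_real_Ioc,
      sub_zero, smul_eq_mul, mul_one, max_eq_left (by positivity)]
  have h1p : 1/((N+1)/N) = q := by rw [one_div_div, hq]
  rw [hsimp1, hsimp2, hsimp3, h1p] at hHold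
  have hexact : (∫ θ, f θ ∂μ) = (2*Real.pi) * (1 + 4*A) ^ (-(1/2) : ℝ) :=
    Stmt18Aux.exact_integral A hA0
  have hmono : (∫ θ, ((1 + 2 * (x * (1 + x)) * (1 - Real.cos θ)) ^ (m + 1))⁻¹ ∂μ)
      ≤ ∫ θ, f θ ^ q ∂μ :=
    integral_mono hcont1.integrableOn_Ioc hcontfq.integrableOn_Ioc hpt
  have step1 : (2 * Real.pi)⁻¹
        * (∫ θ, ((1 + 2 * (x * (1 + x)) * (1 - Real.cos θ)) ^ (m + 1))⁻¹ ∂μ)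
      ≤ (2 * Real.pi)⁻¹ * ((∫ θ, f θ ∂μ) ^ q * (2 * Real.pi) ^ (1/(N+1))) := by
    apply mul_le_mul_of_nonneg_left _ (inv_nonneg.mpr h2pi.le)
    exact le_trans hmono hHold
  refine le_trans step1 ?_
  rw [hexact]
  have hV0 : (0:ℝ) ≤ (1 + 4*A) ^ (-(1/2) : ℝ) := Real.rpow_nonneg (by linarith) _
  rw [Real.mul_rpow h2pi.le hV0]
  have h2 : (2*Real.pi) ^ q * (2 * Real.pi) ^ (1/(N+1)) = 2 * Real.pi := by
    rw [← Real.rpow_add h2pi,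
      show q + 1/(N+1) = 1 by rw [hq]; field_simp, Real.rpow_one]
  have hcollect : (2 * Real.pi)⁻¹
        * ((2*Real.pi) ^ q * ((1 + 4*A) ^ (-(1/2):ℝ)) ^ q * (2 * Real.pi) ^ (1/(N+1)))
      = ((1 + 4*A) ^ (-(1/2):ℝ)) ^ q := by
    calc (2 * Real.pi)⁻¹
          * ((2*Real.pi) ^ q * ((1 + 4*A) ^ (-(1/2):ℝ)) ^ q * (2 * Real.pi) ^ (1/(N+1)))
        = ((1 + 4*A) ^ (-(1/2):ℝ)) ^ q
            * ((2 * Real.pi)⁻¹ * ((2*Real.pi) ^ q * (2 * Real.pi) ^ (1/(N+1)))) := by ring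
      _ = ((1 + 4*A) ^ (-(1/2):ℝ)) ^ q := by
          rw [h2, inv_mul_cancel₀ h2pi.ne', mul_one]
  rw [hcollect]
  have hbase : (0:ℝ) ≤ 1 + 4*A := by linarith
  rw [← Real.rpow_mul hbase]
  apply le_of_eq
  rw [show (-(1/2):ℝ) * q = -((m+1 : ℕ) : ℝ) / (2 * (((m+1 : ℕ) : ℝ) + 1)) by
      rw [hq, hN]; push_cast; field_simp]
  rw [show (1 + 4*A) = 4 * (((m+1 : ℕ) : ℝ) + 1) * x * (1+x) + 1 by
      rw [hA, hN]; push_cast; ring]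
end
end

section
/- Let $n>0$ be a real number and define $K_n(x)=\sum_{k=0}^{\infty}\left(e^{-nx}\frac{(nx)^k}{k!}\right)^2$ for $x\ge0$. Then for every $x\ge0$, $K_n(x)\le\frac{1}{\sqrt{4nx+1}}$. -/
open scoped BigOperators
open Finset

lemma cb_le_four_pow (m : ℕ) : Nat.centralBinom m ≤ 4 ^ m := by
  induction m with
  | zero => simp [Nat.centralBinom]
  | succ m ih =>
    have h := Nat.succ_mul_centralBinom_succ m
    have : (m+1) * Nat.centralBinom (m+1) ≤ (m+1) * 4 ^ (m+1) := by
      rw [h]; calc 2 * (2*m+1) * Nat.centralBinom m ≤ 2 * (2*m+2) * 4 ^ m :=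
                    Nat.mul_le_mul (by omega) ih
        _ = (m+1) * 4^(m+1) := by ring
    exact Nat.le_of_mul_le_mul_left this (Nat.succ_pos m)

lemma cb_sq (m : ℕ) : (2*m+1) * Nat.centralBinom m ^ 2 ≤ 16 ^ m := by
  induction m with
  | zero => simp [Nat.centralBinom]
  | succ m ih =>
    have h := Nat.succ_mul_centralBinom_succ m
    have key : (m+1)^2 * ((2*(m+1)+1) * Nat.centralBinom (m+1) ^ 2)
        ≤ (m+1)^2 * 16 ^ (m+1) := by
      have e1 : (m+1)^2 * ((2*(m+1)+1) * Nat.centralBinom (m+1) ^ 2)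
          = (2*m+3) * ((m+1) * Nat.centralBinom (m+1))^2 := by ring
      rw [e1, h]
      have e2 : (2*m+3) * (2 * (2*m+1) * Nat.centralBinom m)^2
          = ((2*m+3)*(2*m+1)) * (4 * ((2*m+1) * Nat.centralBinom m ^2)) := by ring
      rw [e2]
      calc ((2*m+3)*(2*m+1)) * (4 * ((2*m+1) * Nat.centralBinom m ^2))
          ≤ ((2*m+2)*(2*m+2)) * (4 * 16 ^ m) :=
            Nat.mul_le_mul (by nlinarith) (Nat.mul_le_mul_left 4 ih)
        _ = (m+1)^2 * 16^(m+1) := by ring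
    exact Nat.le_of_mul_le_mul_left key (by positivity)

lemma fact_two_mul (m : ℕ) : (2*m).factorial = Nat.centralBinom m * (m.factorial * m.factorial) := by
  have := Nat.choose_mul_factorial_mul_factorial (Nat.le_mul_of_pos_left m two_pos)
  rw [Nat.centralBinom]
  have h2 : 2*m - m = m := by omega
  rw [h2] at this
  rw [← this]; ring

lemma nat_even (m : ℕ) : Nat.centralBinom m * (2*m).factorial ≤ 16^m * m.factorial^2 := by
  rw [fact_two_mul]
  calc Nat.centralBinom m * (Nat.centralBinom m * (m.factorial * m.factorial))
      = (Nat.centralBinom m * Nat.centralBinom m) * (m.factorial * m.factorial) := by ring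
    _ ≤ (4^m * 4^m) * (m.factorial * m.factorial) :=
        Nat.mul_le_mul (Nat.mul_le_mul (cb_le_four_pow m) (cb_le_four_pow m)) le_rfl
    _ = 16^m * m.factorial^2 := by
        have : (16:ℕ)^m = 4^m * 4^m := by rw [← pow_add]; rw [← two_mul, pow_mul]; norm_num
        rw [this]; ring

lemma nat_odd (m : ℕ) : Nat.centralBinom m * (2*m+1).factorial ≤ 16^m * m.factorial^2 := by
  have h : (2*m+1).factorial = (2*m+1) * (2*m).factorial := Nat.factorial_succ _
  rw [h, fact_two_mul]
  calc Nat.centralBinom m * ((2*m+1) * (Nat.centralBinom m * (m.factorial * m.factorial)))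
      = ((2*m+1) * Nat.centralBinom m ^2) * (m.factorial * m.factorial) := by ring
    _ ≤ 16^m * (m.factorial * m.factorial) := Nat.mul_le_mul (cb_sq m) le_rfl
    _ = 16^m * m.factorial^2 := by ring

lemma g_summable (t : ℝ) :
    Summable (fun k : ℕ => (t ^ k / (k.factorial : ℝ)) ^ 2) := by
  have hle : ∀ k : ℕ, (t ^ k / (k.factorial : ℝ)) ^ 2 ≤ (t^2)^k / (k.factorial : ℝ) := by
    intro k
    rw [div_pow, ← pow_mul, mul_comm k 2, pow_mul]
    apply div_le_div_of_nonneg_left (by positivity) (by positivity)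
    have h1 : (1:ℝ) ≤ (k.factorial : ℝ) := by exact_mod_cast k.factorial_pos
    nlinarith
  exact Summable.of_nonneg_of_le (fun k => by positivity) hle
    (Real.summable_pow_div_factorial (t^2))

lemma inner_eq (t : ℝ) (m : ℕ) :
    ∑ kl ∈ antidiagonal m, (t ^ kl.1 / (kl.1.factorial : ℝ)) ^ 2 *
      (t ^ kl.2 / (kl.2.factorial : ℝ)) ^ 2
    = (Nat.centralBinom m : ℝ) * t ^ (2*m) / ((m.factorial : ℝ))^2 := by
  have key : ∀ kl ∈ antidiagonal m,
      (t ^ kl.1 / (kl.1.factorial : ℝ)) ^ 2 * (t ^ kl.2 / (kl.2.factorial : ℝ)) ^ 2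
      = ((m.choose kl.1 : ℝ) * (m.choose kl.2 : ℝ)) * t ^ (2*m) / ((m.factorial : ℝ))^2 := by
    rintro ⟨i, j⟩ hij
    rw [Finset.HasAntidiagonal.mem_antidiagonal] at hij
    have hij' : j = m - i := by omega
    have hi : i ≤ m := by omega
    have hcc : (m.choose i : ℝ) * (m.choose j : ℝ) * ((i.factorial : ℝ) * (j.factorial:ℝ))^2
        = ((m.factorial : ℝ))^2 := by
      have h1 : (m.choose i) * i.factorial * (m-i).factorial = m.factorial :=
        Nat.choose_mul_factorial_mul_factorial hi
      have h2 : (m.choose j : ℝ) = (m.choose i : ℝ) := by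
        rw [hij', Nat.choose_symm hi]
      have h1' : ((m.choose i : ℝ)) * (i.factorial : ℝ) * ((m-i).factorial : ℝ)
          = (m.factorial : ℝ) := by exact_mod_cast congrArg (Nat.cast (R := ℝ)) h1
      rw [h2, hij']
      nlinarith [h1']
    have hpow : t ^ i * t ^ j = t ^ m := by rw [← pow_add, hij]
    have hfi : ((i.factorial : ℝ)) ≠ 0 := by positivity
    have hfj : ((j.factorial : ℝ)) ≠ 0 := by positivity
    have hfm : ((m.factorial : ℝ)) ≠ 0 := by positivity
    have ht2 : t ^ (2*m) = (t^m)^2 := by rw [← pow_mul, mul_comm]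
    field_simp
    rw [ht2, ← hpow]
    nlinarith [hcc]
  rw [Finset.sum_congr rfl key, ← Finset.sum_div, ← Finset.sum_mul]
  congr 2
  rw [Nat.centralBinom, two_mul, Nat.add_choose_eq]
  push_cast
  rfl

lemma termwise (t : ℝ) (ht : 0 ≤ t) (m : ℕ) :
    (Nat.centralBinom m : ℝ) * t ^ (2*m) / ((m.factorial : ℝ))^2 * (4*t+1)
      ≤ (4*t)^(2*m) / (((2*m).factorial : ℝ)) + (4*t)^(2*m+1) / (((2*m+1).factorial : ℝ)) := by
  have hP : (0:ℝ) ≤ t ^ (2*m) := by positivity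
  have hA : (Nat.centralBinom m : ℝ) / ((m.factorial : ℝ))^2 ≤ 16^m / (((2*m).factorial : ℝ)) := by
    rw [div_le_div_iff₀ (by positivity) (by positivity)]
    exact_mod_cast nat_even m
  have hB : (Nat.centralBinom m : ℝ) / ((m.factorial : ℝ))^2 ≤ 16^m / (((2*m+1).factorial : ℝ)) := by
    rw [div_le_div_iff₀ (by positivity) (by positivity)]
    exact_mod_cast nat_odd m
  have e1 : (4*t)^(2*m) = 16^m * t^(2*m) := by
    rw [mul_pow, pow_mul]; norm_num
  have e2 : (4*t)^(2*m+1) = 4*t*(16^m * t^(2*m)) := by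
    rw [pow_succ, e1]; ring
  rw [e1, e2]
  have h1 := mul_le_mul_of_nonneg_right hA hP
  have h2 := mul_le_mul_of_nonneg_right hB (by positivity : (0:ℝ) ≤ 4*t*t^(2*m))
  have hx : (Nat.centralBinom m : ℝ) * t ^ (2*m) / ((m.factorial : ℝ))^2 * (4*t+1)
      = (Nat.centralBinom m : ℝ) / ((m.factorial : ℝ))^2 * t^(2*m)
        + (Nat.centralBinom m : ℝ) / ((m.factorial : ℝ))^2 * (4*t*t^(2*m)) := by ring
  rw [hx]
  have hy : 16^m * t^(2*m) / (((2*m).factorial : ℝ)) = 16^m / (((2*m).factorial : ℝ)) * t^(2*m) := by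
    ring
  have hz : 4*t*(16^m * t^(2*m)) / (((2*m+1).factorial : ℝ))
      = 16^m / (((2*m+1).factorial : ℝ)) * (4*t*t^(2*m)) := by ring
  rw [hy, hz]
  exact add_le_add h1 h2

lemma cauchy_sq (g : ℕ → ℝ) (hg : Summable g) (hgn : ∀ k, 0 ≤ g k) :
    (∑' k, g k)^2 = ∑' m : ℕ, ∑ kl ∈ Finset.HasAntidiagonal.antidiagonal m, g kl.1 * g kl.2 := by
  rw [sq]
  exact Summable.tsum_mul_tsum_eq_tsum_sum_antidiagonal hg hg (hg.mul_of_nonneg hg hgn hgn)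

lemma cauchy_summable (g : ℕ → ℝ) (hg : Summable g) (hgn : ∀ k, 0 ≤ g k) :
    Summable (fun m : ℕ => ∑ kl ∈ Finset.HasAntidiagonal.antidiagonal m, g kl.1 * g kl.2) :=
  summable_sum_mul_antidiagonal_of_summable_mul (hg.mul_of_nonneg hg hgn hgn)

lemma core (t : ℝ) (ht : 0 ≤ t) :
    (∑' k : ℕ, (t ^ k / (k.factorial : ℝ)) ^ 2)^2 * (4*t+1) ≤ Real.exp (4*t) := by
  have hg := g_summable t
  have hgn : ∀ k : ℕ, 0 ≤ (t ^ k / (k.factorial : ℝ)) ^ 2 := fun k => by positivity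
  have hC : (∑' k : ℕ, (t ^ k / (k.factorial : ℝ)) ^ 2)^2
      = ∑' m : ℕ, (Nat.centralBinom m : ℝ) * t ^ (2*m) / ((m.factorial : ℝ))^2 := by
    rw [cauchy_sq _ hg hgn]
    exact tsum_congr (inner_eq t)
  have hsum_c : Summable (fun m : ℕ =>
      (Nat.centralBinom m : ℝ) * t ^ (2*m) / ((m.factorial : ℝ))^2) := by
    have h2 := cauchy_summable _ hg hgn
    simpa only [inner_eq t] using h2
  have hh : Summable (fun j : ℕ => (4*t)^j / (j.factorial : ℝ)) :=
    Real.summable_pow_div_factorial (4*t)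
  have hhe : Summable (fun m : ℕ => (4*t)^(2*m) / (((2*m).factorial : ℝ))) :=
    hh.comp_injective (fun a b h => by omega)
  have hho : Summable (fun m : ℕ => (4*t)^(2*m+1) / (((2*m+1).factorial : ℝ))) :=
    hh.comp_injective (fun a b h => by omega)
  have step1 : (∑' m : ℕ, (Nat.centralBinom m : ℝ) * t ^ (2*m) / ((m.factorial : ℝ))^2 * (4*t+1))
      ≤ ∑' m : ℕ, ((4*t)^(2*m) / (((2*m).factorial : ℝ)) + (4*t)^(2*m+1) / (((2*m+1).factorial : ℝ))) :=
    Summable.tsum_le_tsum (termwise t ht) (hsum_c.mul_right _) (hhe.add hho)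
  have step2 : (∑' m : ℕ, ((4*t)^(2*m) / (((2*m).factorial : ℝ)) + (4*t)^(2*m+1) / (((2*m+1).factorial : ℝ))))
      = Real.exp (4*t) := by
    rw [Summable.tsum_add hhe hho,
      tsum_even_add_odd (f := fun j : ℕ => (4*t)^j / (j.factorial : ℝ)) hhe hho,
      Real.exp_eq_exp_ℝ, NormedSpace.exp_eq_tsum (𝕂 := ℝ)]
    exact tsum_congr fun j => by rw [smul_eq_mul]; ring
  have step0 : (∑' m : ℕ, (Nat.centralBinom m : ℝ) * t ^ (2*m) / ((m.factorial : ℝ))^2) * (4*t+1)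
      = ∑' m : ℕ, (Nat.centralBinom m : ℝ) * t ^ (2*m) / ((m.factorial : ℝ))^2 * (4*t+1) :=
    tsum_mul_right.symm
  rw [hC, step0]
  exact step1.trans step2.le

lemma final (t : ℝ) (ht : 0 ≤ t) :
    Real.exp (-t)^2 * (∑' k : ℕ, (t ^ k / (k.factorial : ℝ)) ^ 2)
      ≤ 1 / Real.sqrt (4*t+1) := by
  set S := ∑' k : ℕ, (t ^ k / (k.factorial : ℝ)) ^ 2 with hSdef
  have hc : (0:ℝ) < 4*t+1 := by linarith
  have hexp4 : Real.exp (-t)^4 = Real.exp (-(4*t)) := by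
    rw [← Real.exp_nat_mul]; norm_num
  have hsq : (Real.exp (-t)^2 * S)^2 * (4*t+1) ≤ 1 := by
    have h1 := core t ht
    have he : (Real.exp (-t)^2 * S)^2 * (4*t+1) = Real.exp (-t)^4 * (S^2*(4*t+1)) := by ring
    rw [he, hexp4]
    calc Real.exp (-(4*t)) * (S^2*(4*t+1)) ≤ Real.exp (-(4*t)) * Real.exp (4*t) :=
          mul_le_mul_of_nonneg_left h1 (Real.exp_nonneg _)
      _ = 1 := by rw [← Real.exp_add]; simp
  have ha : 0 ≤ Real.exp (-t)^2 * S := by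
    have hS : 0 ≤ S := tsum_nonneg (fun k => by positivity)
    positivity
  have h2 : (Real.exp (-t)^2 * S)^2 ≤ 1/(4*t+1) := by
    rw [le_div_iff₀ hc]; exact hsq
  calc Real.exp (-t)^2 * S = Real.sqrt ((Real.exp (-t)^2 * S)^2) := (Real.sqrt_sq ha).symm
    _ ≤ Real.sqrt (1/(4*t+1)) := Real.sqrt_le_sqrt h2
    _ = 1 / Real.sqrt (4*t+1) := by rw [one_div, one_div, Real.sqrt_inv]

/-- For real `n > 0` and `x ≥ 0`,
`K_n(x) = ∑ (e^{-nx}(nx)^k/k!)² ≤ 1/√(4nx+1)`. -/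
theorem stmt_19 (n : ℝ) (hn : 0 < n) (x : ℝ) (hx : 0 ≤ x) :
    (∑' k : ℕ, (Real.exp (-n * x) * (n * x) ^ k / (k.factorial : ℝ)) ^ 2) ≤
      1 / Real.sqrt (4 * n * x + 1) := by
  have ht : 0 ≤ n * x := mul_nonneg hn.le hx
  have hterm : ∀ k : ℕ, (Real.exp (-n * x) * (n * x) ^ k / (k.factorial : ℝ)) ^ 2
      = Real.exp (-(n*x))^2 * (((n*x) ^ k / (k.factorial : ℝ)) ^ 2) := by
    intro k
    rw [neg_mul]
    have hf : ((k.factorial : ℝ)) ≠ 0 := by positivity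
    field_simp
  rw [tsum_congr hterm, tsum_mul_left]
  have hg : 4 * n * x + 1 = 4 * (n*x) + 1 := by ring
  rw [hg]
  exact final (n*x) ht
end
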